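/- arXiv:1106.4581 — 5 statements merged into one kernel-verified Lean document; each statement's English description precedes it below -/
import Mathlib

section
/- For every d ≥ 2, K ≥ 1 and M ≥ 0 there exists a radius R > 0, depending only on d, K and M, such that for every bounded sequence of polynomials {P_m}_{m≥1} with bounds d, K, M, every m ≥ 0, and every z ∈ ℂ with |z| > R, one has |Q_{m,n}(z)| → ∞ as n → ∞. -/
open Filter Topology Polynomial
open scoped OnePoint

/-- The spherical (chordal) metric on the Riemann sphere `ℂ̂ = ℂ ∪ {∞}`. -/
noncomputable def sphDist : OnePoint ℂ → OnePoint ℂ → ℝ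
  | (x : ℂ), (y : ℂ) => 2 * ‖x - y‖ /
      (Real.sqrt (1 + ‖x‖ ^ 2) * Real.sqrt (1 + ‖y‖ ^ 2))
  | (x : ℂ), ∞ => 2 / Real.sqrt (1 + ‖x‖ ^ 2)
  | ∞, (y : ℂ) => 2 / Real.sqrt (1 + ‖y‖ ^ 2)
  | ∞, ∞ => 0

/-- A bounded sequence of polynomials with bounds `d`, `K`, `M`:
for every `m ≥ 1`, `2 ≤ deg P_m ≤ d`, `1/K ≤ |leading coeff| ≤ K` and all the
lower order coefficients have absolute value at most `M`. -/
def IsBoundedSeq (d : ℕ) (K M : ℝ) (P : ℕ → Polynomial ℂ) : Prop :=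
  ∀ m, 1 ≤ m →
    2 ≤ (P m).natDegree ∧ (P m).natDegree ≤ d ∧
    1 / K ≤ ‖(P m).leadingCoeff‖ ∧ ‖(P m).leadingCoeff‖ ≤ K ∧
    ∀ k, k < (P m).natDegree → ‖(P m).coeff k‖ ≤ M

/-- `Q_{m,n} = P_n ∘ ⋯ ∘ P_{m+1}` on `ℂ` (the identity when `n ≤ m`). -/
noncomputable def Qc (P : ℕ → Polynomial ℂ) (m n : ℕ) (z : ℂ) : ℂ :=
  (List.range (n - m)).foldl (fun w k => (P (m + k + 1)).eval w) z

/-- The extension of `Q_{m,n}` to the Riemann sphere, with `∞ ↦ ∞`. -/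
noncomputable def Qhat (P : ℕ → Polynomial ℂ) (m n : ℕ) : OnePoint ℂ → OnePoint ℂ :=
  OnePoint.map (Qc P m n)

/-- `f j → g` uniformly on compact subsets of `N`, with respect to the spherical metric. -/
def UnifConvOnCompacts (N : Set (OnePoint ℂ)) (f : ℕ → OnePoint ℂ → OnePoint ℂ)
    (g : OnePoint ℂ → OnePoint ℂ) : Prop :=
  ∀ C : Set (OnePoint ℂ), C ⊆ N → IsCompact C → ∀ ε > (0 : ℝ), ∃ j₀ : ℕ, ∀ j ≥ j₀,
    ∀ z ∈ C, sphDist (f j z) (g z) < ε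

/-- The family `{Q_{m,n}}_{n ≥ m}` is normal on the open set `N`: every sequence from
the family has a subsequence converging locally uniformly on `N` with respect to the
spherical metric. -/
def NormalOn (P : ℕ → Polynomial ℂ) (m : ℕ) (N : Set (OnePoint ℂ)) : Prop :=
  ∀ k : ℕ → ℕ, (∀ j, m ≤ k j) → ∃ s : ℕ → ℕ, StrictMono s ∧
    ∃ g : OnePoint ℂ → OnePoint ℂ,
      UnifConvOnCompacts N (fun j => Qhat P m (k (s j))) g

/-- The Fatou set at time `m`. -/
def Fatou (P : ℕ → Polynomial ℂ) (m : ℕ) : Set (OnePoint ℂ) :=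
  {z | ∃ N : Set (OnePoint ℂ), IsOpen N ∧ z ∈ N ∧ NormalOn P m N}

/-- The iterated Julia set at time `m`. -/
def Julia (P : ℕ → Polynomial ℂ) (m : ℕ) : Set (OnePoint ℂ) :=
  (Fatou P m)ᶜ

/-- The basin at infinity at time `m`: points `z` with `Q_{m,n}(z) → ∞` as `n → ∞`
in the spherical metric. -/
def BasinInfty (P : ℕ → Polynomial ℂ) (m : ℕ) : Set (OnePoint ℂ) :=
  {z | Tendsto (fun n => sphDist (Qhat P m n z) ∞) atTop (𝓝 0)}

/-- The filled Julia set at time `m`. -/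
def FilledJulia (P : ℕ → Polynomial ℂ) (m : ℕ) : Set (OnePoint ℂ) :=
  (BasinInfty P m)ᶜ


lemma poly_lower (d : ℕ) (K M : ℝ) (hK : 1 ≤ K) (hM : 0 ≤ M)
    (p : Polynomial ℂ) (h2 : 2 ≤ p.natDegree) (hdd : p.natDegree ≤ d)
    (hlc : 1 / K ≤ ‖p.leadingCoeff‖)
    (hco : ∀ k, k < p.natDegree → ‖p.coeff k‖ ≤ M)
    (w : ℂ) (hw : K * (M * d + 2) < ‖w‖) :
    2 * ‖w‖ ≤ ‖p.eval w‖ := by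
  set n := p.natDegree with hn
  have hK0 : (0 : ℝ) < K := lt_of_lt_of_le one_pos hK
  have hw1 : 1 ≤ ‖w‖ := by
    have hMd : (0:ℝ) ≤ M * d := by positivity
    have : (1:ℝ) ≤ K * (M * d + 2) := by nlinarith
    linarith
  have hw0 : (0:ℝ) < ‖w‖ := lt_of_lt_of_le one_pos hw1
  have hev : p.eval w = (∑ i ∈ Finset.range n, p.coeff i * w ^ i) + p.leadingCoeff * w ^ n := by
    rw [eval_eq_sum_range, Finset.sum_range_succ, Polynomial.leadingCoeff]
  have hsum : ‖∑ i ∈ Finset.range n, p.coeff i * w ^ i‖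
      ≤ (M * d) * ‖w‖ ^ (n - 1) := by
    calc ‖∑ i ∈ Finset.range n, p.coeff i * w ^ i‖
        ≤ ∑ i ∈ Finset.range n, ‖p.coeff i * w ^ i‖ := by
          exact norm_sum_le _ _
      _ ≤ ∑ i ∈ Finset.range n, M * ‖w‖ ^ (n - 1) := by
          apply Finset.sum_le_sum
          intro i hi
          have hi' : i < n := Finset.mem_range.mp hi
          rw [norm_mul, norm_pow]
          have h1 : ‖p.coeff i‖ ≤ M := hco i (Finset.mem_range.mp hi)
          have h2 : ‖w‖ ^ i ≤ ‖w‖ ^ (n - 1) :=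
            pow_le_pow_right₀ hw1 (by omega)
          exact mul_le_mul h1 h2 (by positivity) hM
      _ = (M * n) * ‖w‖ ^ (n - 1) := by
          rw [Finset.sum_const, Finset.card_range, nsmul_eq_mul]; ring
      _ ≤ (M * d) * ‖w‖ ^ (n - 1) := by
          have : (n : ℝ) ≤ d := Nat.cast_le.mpr hdd
          have : M * n ≤ M * d := by nlinarith
          nlinarith [pow_pos hw0 (n-1)]
  have hlead : (1 / K) * ‖w‖ ^ n ≤ ‖p.leadingCoeff * w ^ n‖ := by
    rw [norm_mul, norm_pow]
    exact mul_le_mul_of_nonneg_right hlc (by positivity)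
  have key : ‖p.leadingCoeff * w ^ n‖
      - ‖∑ i ∈ Finset.range n, p.coeff i * w ^ i‖ ≤ ‖p.eval w‖ := by
    rw [hev]
    have := norm_sub_norm_le (p.leadingCoeff * w ^ n)
      (-(∑ i ∈ Finset.range n, p.coeff i * w ^ i))
    simpa [sub_neg_eq_add, add_comm] using this
  have hpow : ‖w‖ ^ n = ‖w‖ ^ (n - 1) * ‖w‖ := by
    rw [← pow_succ]; congr 1; omega
  have hwn1 : ‖w‖ ≤ ‖w‖ ^ (n - 1) :=
    le_self_pow₀ hw1 (by omega)
  have hfac : (2 : ℝ) ≤ (1/K) * ‖w‖ - M * d := by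
    have h1 : M * d + 2 ≤ ‖w‖ / K := (le_div_iff₀ hK0).mpr (by nlinarith)
    have h2 : 1/K * ‖w‖ = ‖w‖ / K := by ring
    linarith
  calc 2 * ‖w‖ ≤ 2 * ‖w‖ ^ (n-1) := by nlinarith
    _ ≤ ((1/K) * ‖w‖ - M * d) * ‖w‖ ^ (n-1) := by
        nlinarith [pow_pos hw0 (n-1)]
    _ = (1/K) * ‖w‖ ^ n - (M * d) * ‖w‖ ^ (n-1) := by
        rw [hpow]; ring
    _ ≤ ‖p.eval w‖ := by linarith


lemma foldl_lower (d : ℕ) (K M : ℝ) (hd : 2 ≤ d) (hK : 1 ≤ K) (hM : 0 ≤ M)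
    (P : ℕ → Polynomial ℂ) (hP : IsBoundedSeq d K M P) (m : ℕ) (z : ℂ)
    (hz : K * (M * d + 2) < ‖z‖) :
    ∀ j : ℕ, 2 ^ j * ‖z‖ ≤
      ‖(List.range j).foldl (fun w k => (P (m + k + 1)).eval w) z‖ := by
  intro j
  induction j with
  | zero => simp
  | succ j ih =>
    rw [List.range_succ, List.foldl_append]
    set w := (List.range j).foldl (fun w k => (P (m + k + 1)).eval w) z with hwdef
    simp only [List.foldl_cons, List.foldl_nil]
    have hz0 : (0:ℝ) < ‖z‖ := by
      have hMd : (0:ℝ) ≤ M * d := by positivity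
      nlinarith
    have hzw : ‖z‖ ≤ ‖w‖ := by
      have h1 : (1:ℝ) ≤ 2 ^ j := one_le_pow₀ (by norm_num)
      nlinarith
    have hw : K * (M * d + 2) < ‖w‖ := lt_of_lt_of_le hz hzw
    obtain ⟨hdeg2, hdegd, hlc1, hlc2, hcoef⟩ := hP (m + j + 1) (by omega)
    have := poly_lower d K M hK hM (P (m + j + 1)) hdeg2 hdegd hlc1 hcoef w hw
    calc 2 ^ (j+1) * ‖z‖ = 2 * (2 ^ j * ‖z‖) := by ring
      _ ≤ 2 * ‖w‖ := by nlinarith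
      _ ≤ _ := this

/-- Existence of an escape radius depending only on the bounds `d`, `K`, `M`:
all points of modulus greater than `R` escape to infinity under any bounded
sequence of polynomials with these bounds. -/
theorem exists_escape_radius (d : ℕ) (K M : ℝ) (hd : 2 ≤ d) (hK : 1 ≤ K) (hM : 0 ≤ M) :
    ∃ R > (0 : ℝ), ∀ P : ℕ → Polynomial ℂ, IsBoundedSeq d K M P →
      ∀ m : ℕ, ∀ z : ℂ, R < ‖z‖ →
        Tendsto (fun n => ‖Qc P m n z‖) atTop atTop := by
  refine ⟨K * (M * d + 2), ?_, ?_⟩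
  · have hMd : (0:ℝ) ≤ M * d := by positivity
    nlinarith
  intro P hP m z hz
  have hz0 : (0:ℝ) < ‖z‖ := by
    have hMd : (0:ℝ) ≤ M * d := by positivity
    nlinarith
  have hlow := foldl_lower d K M hd hK hM P hP m z hz
  have hg : Tendsto (fun n : ℕ => (2:ℝ) ^ (n - m) * ‖z‖) atTop atTop := by
    exact ((tendsto_pow_atTop_atTop_of_one_lt (by norm_num : (1:ℝ) < 2)).comp
      (tendsto_sub_atTop_nat m)).atTop_mul_const hz0
  apply tendsto_atTop_mono _ hg
  intro n
  exact hlow (n - m)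
end

section
/- Let {P_m}_{m≥1} be a bounded sequence of polynomials with bounds d, K, M. Then for every m ≥ 0, the topological boundary of the filled Julia set at time m equals the iterated Julia set at time m: ∂K_m = J_m. -/
open Filter Topology Polynomial
open scoped OnePoint

-- ## Auxiliary development

section Aux

noncomputable def sphPt : OnePoint ℂ → EuclideanSpace ℝ (Fin 3)
  | (z : ℂ) => !₂[2 * z.re / (1 + ‖z‖ ^ 2), 2 * z.im / (1 + ‖z‖ ^ 2),
      (‖z‖ ^ 2 - 1) / (1 + ‖z‖ ^ 2)]
  | ∞ => !₂[0, 0, 1]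

lemma eq_sqrt_of_sq {a b : ℝ} (ha : 0 ≤ a) (h : b = a ^ 2) : a = Real.sqrt b := by
  rw [h, Real.sqrt_sq ha]

lemma abs_sq_eq (c : ℂ) : ‖c‖ ^ 2 = c.re ^ 2 + c.im ^ 2 := by
  rw [Complex.sq_norm, Complex.normSq_apply]; ring

lemma dist3 (a b : EuclideanSpace ℝ (Fin 3)) :
    dist a b = Real.sqrt ((a 0 - b 0) ^ 2 + ((a 1 - b 1) ^ 2 + (a 2 - b 2) ^ 2)) := by
  rw [EuclideanSpace.dist_eq, Fin.sum_univ_three]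
  simp [Real.dist_eq, sq_abs, add_assoc]

lemma sphDist_eq_dist (x y : OnePoint ℂ) : sphDist x y = dist (sphPt x) (sphPt y) := by
  cases x with
  | infty =>
    cases y with
    | infty => simp [sphDist, sphPt, dist3]
    | coe w =>
      have hv : (0:ℝ) < 1 + ‖w‖ ^ 2 := by positivity
      show 2 / Real.sqrt (1 + ‖w‖ ^ 2) = _
      rw [dist3]
      apply eq_sqrt_of_sq (by positivity)
      show _ = (2 / Real.sqrt (1 + ‖w‖ ^ 2)) ^ 2
      rw [div_pow, Real.sq_sqrt hv.le]
      show ((0:ℝ) - 2 * w.re / (1 + ‖w‖ ^ 2)) ^ 2 +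
        (((0:ℝ) - 2 * w.im / (1 + ‖w‖ ^ 2)) ^ 2 +
          ((1:ℝ) - (‖w‖ ^ 2 - 1) / (1 + ‖w‖ ^ 2)) ^ 2) = _
      rw [abs_sq_eq]
      have h0 : (0:ℝ) < 1 + (w.re ^ 2 + w.im ^ 2) := by positivity
      field_simp
      ring
  | coe z =>
    cases y with
    | infty =>
      have hv : (0:ℝ) < 1 + ‖z‖ ^ 2 := by positivity
      show 2 / Real.sqrt (1 + ‖z‖ ^ 2) = _
      rw [dist3]
      apply eq_sqrt_of_sq (by positivity)
      show _ = (2 / Real.sqrt (1 + ‖z‖ ^ 2)) ^ 2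
      rw [div_pow, Real.sq_sqrt hv.le]
      show (2 * z.re / (1 + ‖z‖ ^ 2) - 0) ^ 2 +
        ((2 * z.im / (1 + ‖z‖ ^ 2) - 0) ^ 2 +
          ((‖z‖ ^ 2 - 1) / (1 + ‖z‖ ^ 2) - 1) ^ 2) = _
      rw [abs_sq_eq]
      have h0 : (0:ℝ) < 1 + (z.re ^ 2 + z.im ^ 2) := by positivity
      field_simp
      ring
    | coe w =>
      have hu : (0:ℝ) < 1 + ‖z‖ ^ 2 := by positivity
      have hv : (0:ℝ) < 1 + ‖w‖ ^ 2 := by positivity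
      show 2 * ‖z - w‖ / (Real.sqrt (1 + ‖z‖ ^ 2) * Real.sqrt (1 + ‖w‖ ^ 2)) = _
      rw [dist3]
      apply eq_sqrt_of_sq (by positivity)
      rw [div_pow, mul_pow 2, mul_pow (Real.sqrt _), Real.sq_sqrt hu.le, Real.sq_sqrt hv.le]
      show (2 * z.re / (1 + ‖z‖ ^ 2) - 2 * w.re / (1 + ‖w‖ ^ 2)) ^ 2 +
        ((2 * z.im / (1 + ‖z‖ ^ 2) - 2 * w.im / (1 + ‖w‖ ^ 2)) ^ 2 +
          ((‖z‖ ^ 2 - 1) / (1 + ‖z‖ ^ 2) -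
            (‖w‖ ^ 2 - 1) / (1 + ‖w‖ ^ 2)) ^ 2) = _
      rw [abs_sq_eq, abs_sq_eq, abs_sq_eq, Complex.sub_re, Complex.sub_im]
      have h0 : (0:ℝ) < 1 + (z.re ^ 2 + z.im ^ 2) := by positivity
      have h1 : (0:ℝ) < 1 + (w.re ^ 2 + w.im ^ 2) := by positivity
      field_simp
      ring

lemma sphDist_triangle (x y z : OnePoint ℂ) : sphDist x z ≤ sphDist x y + sphDist y z := by
  simp only [sphDist_eq_dist]; exact dist_triangle _ _ _

lemma sphDist_comm (x y : OnePoint ℂ) : sphDist x y = sphDist y x := by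
  simp only [sphDist_eq_dist]; exact dist_comm _ _

lemma sphDist_nonneg (x y : OnePoint ℂ) : 0 ≤ sphDist x y := by
  rw [sphDist_eq_dist]; exact dist_nonneg

lemma sphDist_self (x : OnePoint ℂ) : sphDist x x = 0 := by
  rw [sphDist_eq_dist]; exact dist_self _

lemma sphDist_coe_infty (x : ℂ) :
    sphDist (x : OnePoint ℂ) ∞ = 2 / Real.sqrt (1 + ‖x‖ ^ 2) := rfl

lemma sphDist_infty_pos (x : ℂ) : 0 < sphDist (x : OnePoint ℂ) ∞ := by
  rw [sphDist_coe_infty]; positivity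

lemma eq_infty_of_sphDist (a : OnePoint ℂ) (h : sphDist a ∞ ≤ 0) : a = ∞ := by
  cases a with
  | infty => rfl
  | coe x => exact absurd h (not_le.2 (sphDist_infty_pos x))

lemma sphDist_coe_coe_le (x y : ℂ) :
    sphDist (x : OnePoint ℂ) (y : OnePoint ℂ) ≤ 2 * ‖x - y‖ := by
  show 2 * ‖x - y‖ / _ ≤ _
  apply div_le_self (by positivity)
  have h1 : (1:ℝ) ≤ Real.sqrt (1 + ‖x‖ ^ 2) := by
    have := Real.sqrt_le_sqrt (show (1:ℝ) ≤ 1 + ‖x‖ ^ 2 by nlinarith [sq_nonneg (‖x‖)])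
    simpa using this
  have h2 : (1:ℝ) ≤ Real.sqrt (1 + ‖y‖ ^ 2) := by
    have := Real.sqrt_le_sqrt (show (1:ℝ) ≤ 1 + ‖y‖ ^ 2 by nlinarith [sq_nonneg (‖y‖)])
    simpa using this
  nlinarith

lemma sphDist_infty_le {q : ℝ} (hq : 0 < q) (x : ℂ) (hx : q ≤ ‖x‖) :
    sphDist (x : OnePoint ℂ) ∞ ≤ 2 / q := by
  rw [sphDist_coe_infty]
  apply div_le_div_of_nonneg_left (by norm_num) hq
  calc q = Real.sqrt (q ^ 2) := (Real.sqrt_sq hq.le).symm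
    _ ≤ Real.sqrt (1 + ‖x‖ ^ 2) := Real.sqrt_le_sqrt (by nlinarith [norm_nonneg x])

lemma sphDist_infty_ge {B : ℝ} (x : ℂ) (hx : ‖x‖ ≤ B) :
    2 / Real.sqrt (1 + B ^ 2) ≤ sphDist (x : OnePoint ℂ) ∞ := by
  rw [sphDist_coe_infty]
  apply div_le_div_of_nonneg_left (by norm_num) (by positivity)
  exact Real.sqrt_le_sqrt (by nlinarith [norm_nonneg x])

variable {P : ℕ → Polynomial ℂ} {m n : ℕ}

lemma Qc_of_le (h : n ≤ m) (z : ℂ) : Qc P m n z = z := by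
  unfold Qc
  rw [Nat.sub_eq_zero_of_le h]
  rfl

lemma Qc_succ (h : m ≤ n) (z : ℂ) :
    Qc P m (n + 1) z = (P (n + 1)).eval (Qc P m n z) := by
  unfold Qc
  rw [Nat.succ_sub h, List.range_succ, List.foldl_append]
  simp only [List.foldl_cons, List.foldl_nil]
  rw [Nat.add_sub_cancel' h]

lemma continuous_Qc (P : ℕ → Polynomial ℂ) (m n : ℕ) : Continuous (Qc P m n) := by
  unfold Qc
  generalize List.range (n - m) = l
  induction l with
  | nil => exact continuous_id
  | cons a l ih =>
      simp only [List.foldl_cons]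
      exact ih.comp (Polynomial.continuous _)

lemma differentiable_Qc (P : ℕ → Polynomial ℂ) (m n : ℕ) : Differentiable ℂ (Qc P m n) := by
  unfold Qc
  generalize List.range (n - m) = l
  induction l with
  | nil => exact differentiable_id
  | cons a l ih =>
      simp only [List.foldl_cons]
      exact ih.comp (Polynomial.differentiable _)

lemma Qhat_coe (z : ℂ) : Qhat P m n (z : OnePoint ℂ) = (Qc P m n z : OnePoint ℂ) := rfl

lemma Qhat_infty : Qhat P m n ∞ = ∞ := rfl

end Aux

noncomputable def Rc (d : ℕ) (K M : ℝ) : ℝ := max 1 (K * (M * d + 2))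

lemma one_le_Rc {d : ℕ} {K M : ℝ} : 1 ≤ Rc d K M := le_max_left _ _

lemma Rc_pos {d : ℕ} {K M : ℝ} : 0 < Rc d K M := lt_of_lt_of_le one_pos one_le_Rc

lemma eval_big {d : ℕ} {K M : ℝ} {P : ℕ → Polynomial ℂ}
    (hK : 1 ≤ K) (hM : 0 ≤ M) (hP : IsBoundedSeq d K M P)
    {n : ℕ} (hn : 1 ≤ n) {z : ℂ} (hz : Rc d K M ≤ ‖z‖) :
    2 * ‖z‖ ≤ ‖(P n).eval z‖ := by
  obtain ⟨hd2, hdd, hlo, -, hco⟩ := hP n hn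
  rw [Polynomial.leadingCoeff] at hlo
  set D := (P n).natDegree with hD
  set a := ‖z‖ with ha
  have hK0 : (0:ℝ) < K := lt_of_lt_of_le one_pos hK
  have ha1 : (1:ℝ) ≤ a := le_trans (le_max_left _ _) hz
  have haK : K * (M * D + 2) ≤ a := by
    refine le_trans ?_ (le_trans (le_max_right _ _) hz)
    have hcast : (D:ℝ) ≤ d := Nat.cast_le.mpr hdd
    nlinarith [mul_le_mul_of_nonneg_left (mul_le_mul_of_nonneg_left hcast hM) hK0.le]
  have hev : (P n).eval z = (P n).coeff D * z ^ D + ∑ i ∈ Finset.range D, (P n).coeff i * z ^ i := by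
    rw [Polynomial.eval_eq_sum_range, Finset.sum_range_succ]; ring
  have htail : ‖∑ i ∈ Finset.range D, (P n).coeff i * z ^ i‖
      ≤ D * M * a ^ (D - 1) := by
    calc ‖∑ i ∈ Finset.range D, (P n).coeff i * z ^ i‖
        ≤ ∑ i ∈ Finset.range D, ‖(P n).coeff i * z ^ i‖ :=
          norm_sum_le _ _
      _ ≤ ∑ _i ∈ Finset.range D, M * a ^ (D - 1) := by
          apply Finset.sum_le_sum
          intro i hi
          have hiD : i < D := Finset.mem_range.mp hi
          rw [norm_mul, norm_pow]
          have h1 : ‖(P n).coeff i‖ ≤ M := hco i (Finset.mem_range.mp hi)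
          have h2 : a ^ i ≤ a ^ (D - 1) := pow_le_pow_right₀ ha1 (by omega)
          exact mul_le_mul h1 h2 (by positivity) hM
      _ = D * M * a ^ (D - 1) := by rw [Finset.sum_const, Finset.card_range]; ring
  have hlead : 1 / K * a ^ D ≤ ‖(P n).coeff D * z ^ D‖ := by
    rw [norm_mul, norm_pow]
    exact mul_le_mul hlo le_rfl (by positivity) (norm_nonneg _)
  have hsplit : ‖(P n).coeff D * z ^ D‖
      - ‖∑ i ∈ Finset.range D, (P n).coeff i * z ^ i‖
      ≤ ‖(P n).eval z‖ := by
    rw [hev]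
    have := norm_add_le ((P n).coeff D * z ^ D + ∑ i ∈ Finset.range D, (P n).coeff i * z ^ i)
      (-(∑ i ∈ Finset.range D, (P n).coeff i * z ^ i))
    simp only [add_neg_cancel_right, norm_neg] at this
    linarith
  -- main arithmetic
  set A := a ^ (D - 1) with hA
  have hApos : (0:ℝ) < A := by positivity
  have haD : a ^ D = A * a := by
    rw [hA, ← pow_succ]
    congr 1
    omega
  have haA : a ≤ A := by
    calc a = a ^ 1 := (pow_one a).symm
      _ ≤ a ^ (D - 1) := pow_le_pow_right₀ ha1 (by omega)
  have h5 : A * (M * D + 2) ≤ 1 / K * (A * a) := by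
    rw [one_div, inv_mul_eq_div, le_div_iff₀ hK0]
    calc A * (M * D + 2) * K = A * (K * (M * D + 2)) := by ring
      _ ≤ A * a := by
          exact mul_le_mul_of_nonneg_left haK hApos.le
  have hmain : 2 * a ≤ 1 / K * a ^ D - D * M * A := by
    rw [haD]
    nlinarith
  linarith

section Growth

variable {d : ℕ} {K M : ℝ} {P : ℕ → Polynomial ℂ} {m n : ℕ}

lemma Qc_grow (hK : 1 ≤ K) (hM : 0 ≤ M) (hP : IsBoundedSeq d K M P) (hmn : m ≤ n) {z : ℂ}
    (hz : Rc d K M ≤ ‖Qc P m n z‖) :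
    ∀ j, 2 ^ j * ‖Qc P m n z‖ ≤ ‖Qc P m (n + j) z‖ := by
  intro j
  induction j with
  | zero => simp
  | succ j ih =>
    have hR1 : (1:ℝ) ≤ 2 ^ j := one_le_pow₀ one_le_two
    have hq0 : 0 ≤ ‖Qc P m n z‖ := norm_nonneg _
    have hbig : Rc d K M ≤ ‖Qc P m (n + j) z‖ :=
      le_trans hz (le_trans (le_mul_of_one_le_left hq0 hR1) ih)
    have hev := eval_big hK hM hP (n := n + j + 1) (by omega) hbig
    rw [show n + (j + 1) = (n + j) + 1 by ring, Qc_succ (by omega)]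
    calc 2 ^ (j + 1) * ‖Qc P m n z‖
        = 2 * (2 ^ j * ‖Qc P m n z‖) := by ring
      _ ≤ 2 * ‖Qc P m (n + j) z‖ := by linarith
      _ ≤ _ := hev

lemma mem_basin_of_big (hK : 1 ≤ K) (hM : 0 ≤ M) (hP : IsBoundedSeq d K M P) (hmn : m ≤ n)
    {z : ℂ} (hz : Rc d K M ≤ ‖Qc P m n z‖) :
    (z : OnePoint ℂ) ∈ BasinInfty P m := by
  simp only [BasinInfty, Set.mem_setOf_eq]
  apply squeeze_zero' (g := fun n' => 2 / 2 ^ (n' - n))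
    (Eventually.of_forall fun n' => sphDist_nonneg _ _)
  · filter_upwards [eventually_ge_atTop n] with n' hn'
    rw [Qhat_coe]
    have h1 : (2:ℝ) ^ (n' - n) * ‖Qc P m n z‖ ≤ ‖Qc P m n' z‖ := by
      have := Qc_grow hK hM hP hmn hz (n' - n)
      rwa [Nat.add_sub_cancel' hn'] at this
    have h2 : (2:ℝ) ^ (n' - n) ≤ ‖Qc P m n' z‖ := by
      have h3 : (2:ℝ) ^ (n' - n) * 1 ≤ 2 ^ (n' - n) * ‖Qc P m n z‖ :=
        mul_le_mul_of_nonneg_left (le_trans one_le_Rc hz) (by positivity)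
      linarith
    exact sphDist_infty_le (by positivity) _ h2
  · apply Tendsto.div_atTop tendsto_const_nhds
    exact Tendsto.comp (tendsto_pow_atTop_atTop_of_one_lt (by norm_num : (1:ℝ) < 2))
      (tendsto_sub_atTop_nat n)

lemma infty_mem_basin : (∞ : OnePoint ℂ) ∈ BasinInfty P m := by
  simp only [BasinInfty, Set.mem_setOf_eq, Qhat_infty]
  simpa [sphDist_self] using (tendsto_const_nhds : Tendsto (fun _ : ℕ => (0:ℝ)) atTop (𝓝 0))

lemma exists_big_of_mem_basin {x : ℂ} (hx : (x : OnePoint ℂ) ∈ BasinInfty P m) :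
    ∃ n, m ≤ n ∧ Rc d K M < ‖Qc P m n x‖ := by
  have ht : Tendsto (fun n => sphDist (Qhat P m n (x : OnePoint ℂ)) ∞) atTop (𝓝 0) := hx
  have hpos : (0:ℝ) < 2 / Real.sqrt (1 + Rc d K M ^ 2) := by positivity
  obtain ⟨n, h1, h2⟩ := ((ht.eventually (gt_mem_nhds hpos)).and (eventually_ge_atTop m)).exists
  refine ⟨n, h2, ?_⟩
  by_contra hle
  push_neg at hle
  have := sphDist_infty_ge (B := Rc d K M) (Qc P m n x) hle
  rw [Qhat_coe] at h1
  linarith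

lemma abs_le_of_mem_filled (hK : 1 ≤ K) (hM : 0 ≤ M) (hP : IsBoundedSeq d K M P)
    {x : ℂ} (hx : (x : OnePoint ℂ) ∈ FilledJulia P m) :
    ∀ n, ‖Qc P m n x‖ ≤ Rc d K M := by
  intro n
  by_contra hgt
  push_neg at hgt
  apply hx
  rcases le_or_gt m n with h | h
  · exact mem_basin_of_big hK hM hP h hgt.le
  · have he : ‖Qc P m m x‖ = ‖Qc P m n x‖ := by
      rw [Qc_of_le le_rfl, Qc_of_le h.le]
    exact mem_basin_of_big hK hM hP le_rfl (by rw [he]; exact hgt.le)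

lemma infty_not_mem_filled : (∞ : OnePoint ℂ) ∉ FilledJulia P m := fun h => h infty_mem_basin

end Growth

section Wset

variable {d : ℕ} {K M : ℝ} {P : ℕ → Polynomial ℂ} {m n₀ : ℕ}

/-- Escape neighbourhood. -/
def Wset (P : ℕ → Polynomial ℂ) (m n₀ : ℕ) (R : ℝ) : Set (OnePoint ℂ) :=
  {∞} ∪ (fun x : ℂ => (x : OnePoint ℂ)) '' {x : ℂ | R < ‖Qc P m n₀ x‖}

lemma infty_mem_Wset {R : ℝ} : ∞ ∈ Wset P m n₀ R := Or.inl rfl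

lemma coe_mem_Wset {R : ℝ} {x : ℂ} : (x : OnePoint ℂ) ∈ Wset P m n₀ R ↔
    R < ‖Qc P m n₀ x‖ := by
  simp [Wset, OnePoint.coe_eq_coe, (OnePoint.coe_ne_infty x).symm]

lemma preimage_Wset {R : ℝ} :
    ((fun x : ℂ => (x : OnePoint ℂ)) ⁻¹' Wset P m n₀ R) = {x | R < ‖Qc P m n₀ x‖} := by
  ext x
  simp [coe_mem_Wset, Set.mem_preimage]

lemma isOpen_Wset (hK : 1 ≤ K) (hM : 0 ≤ M) (hP : IsBoundedSeq d K M P) (hn₀ : m ≤ n₀) :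
    IsOpen (Wset P m n₀ (Rc d K M)) := by
  rw [OnePoint.isOpen_iff_of_mem' infty_mem_Wset]
  have hcont : Continuous fun x : ℂ => ‖Qc P m n₀ x‖ :=
    continuous_norm.comp (continuous_Qc P m n₀)
  constructor
  · have hpre : ((fun x : ℂ => (x : OnePoint ℂ)) ⁻¹' Wset P m n₀ (Rc d K M))ᶜ
        = {x : ℂ | ‖Qc P m n₀ x‖ ≤ Rc d K M} := by
      rw [preimage_Wset]
      ext x
      simp
    rw [hpre]
    apply IsCompact.of_isClosed_subset (isCompact_closedBall (0:ℂ) (Rc d K M))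
    · exact isClosed_le hcont continuous_const
    · intro x hx
      simp only [Set.mem_setOf_eq] at hx
      rw [Metric.mem_closedBall, Complex.dist_eq, sub_zero]
      by_contra habs
      push_neg at habs
      have h1 : Rc d K M ≤ ‖Qc P m m x‖ := by rw [Qc_of_le le_rfl]; exact habs.le
      have h2 := Qc_grow hK hM hP le_rfl h1 (n₀ - m)
      rw [Nat.add_sub_cancel' hn₀, Qc_of_le le_rfl] at h2
      have h3 : (1:ℝ) ≤ 2 ^ (n₀ - m) := one_le_pow₀ one_le_two
      nlinarith [norm_nonneg x, Rc_pos (d := d) (K := K) (M := M)]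
  · rw [preimage_Wset]
    exact isOpen_lt continuous_const hcont

lemma Wset_subset_basin (hK : 1 ≤ K) (hM : 0 ≤ M) (hP : IsBoundedSeq d K M P) (hn₀ : m ≤ n₀) :
    Wset P m n₀ (Rc d K M) ⊆ BasinInfty P m := by
  rintro w (rfl | ⟨x, hx, rfl⟩)
  · exact infty_mem_basin
  · exact mem_basin_of_big hK hM hP hn₀ (le_of_lt hx)

lemma Wset_unif (hK : 1 ≤ K) (hM : 0 ≤ M) (hP : IsBoundedSeq d K M P) (hn₀ : m ≤ n₀)
    {ε : ℝ} (hε : 0 < ε) :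
    ∃ N₁, ∀ n ≥ N₁, ∀ w ∈ Wset P m n₀ (Rc d K M), sphDist (Qhat P m n w) ∞ < ε := by
  obtain ⟨i₀, hi₀⟩ := pow_unbounded_of_one_lt (R := ℝ) (2 / ε) one_lt_two
  refine ⟨n₀ + i₀, fun n hn w hw => ?_⟩
  have h2i : (0:ℝ) < 2 ^ i₀ := by positivity
  have h4 : 2 / (2:ℝ) ^ i₀ < ε := by
    rw [div_lt_iff₀ h2i]
    rw [div_lt_iff₀ hε] at hi₀
    nlinarith
  rcases hw with rfl | ⟨x, hx, rfl⟩
  · rw [Qhat_infty, sphDist_self]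
    exact hε
  · rw [Qhat_coe]
    simp only [Set.mem_setOf_eq] at hx
    have h1 : (2:ℝ) ^ (n - n₀) * ‖Qc P m n₀ x‖ ≤ ‖Qc P m n x‖ := by
      have := Qc_grow hK hM hP hn₀ hx.le (n - n₀)
      rwa [Nat.add_sub_cancel' (by omega)] at this
    have h2 : (2:ℝ) ^ i₀ ≤ ‖Qc P m n x‖ := by
      have e1 : (2:ℝ) ^ i₀ ≤ 2 ^ (n - n₀) := pow_le_pow_right₀ one_le_two (by omega)
      have e2 : (1:ℝ) ≤ ‖Qc P m n₀ x‖ := le_trans one_le_Rc hx.le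
      nlinarith [pow_pos (zero_lt_two (α := ℝ)) (n - n₀)]
    have h3 := sphDist_infty_le h2i _ h2
    linarith

end Wset

lemma subseq_const_or_tendsto (k : ℕ → ℕ) :
    (∃ (v : ℕ) (s : ℕ → ℕ), StrictMono s ∧ ∀ j, k (s j) = v) ∨
      (∃ s : ℕ → ℕ, StrictMono s ∧ Tendsto (fun j => k (s j)) atTop atTop) := by
  by_cases hb : ∀ B, ∃ j, B < k j
  · right
    let s : ℕ → ℕ := fun i =>
      Nat.rec 0 (fun _ prev => Nat.find (hb ((Finset.range (prev + 1)).sup k))) i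
    have hs : ∀ i, s (i + 1) = Nat.find (hb ((Finset.range (s i + 1)).sup k)) := fun i => rfl
    have hkey : ∀ i, s i < s (i + 1) ∧ k (s i) < k (s (i + 1)) := by
      intro i
      have hspec := Nat.find_spec (hb ((Finset.range (s i + 1)).sup k))
      rw [← hs i] at hspec
      have h1 : k (s i) ≤ (Finset.range (s i + 1)).sup k :=
        Finset.le_sup (Finset.mem_range.mpr (by omega))
      constructor
      · by_contra hle
        push_neg at hle
        have h2 : k (s (i + 1)) ≤ (Finset.range (s i + 1)).sup k :=
          Finset.le_sup (Finset.mem_range.mpr (by omega))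
        omega
      · omega
    have hsm : StrictMono s := strictMono_nat_of_lt_succ fun i => (hkey i).1
    have hksm : StrictMono fun j => k (s j) := strictMono_nat_of_lt_succ fun i => (hkey i).2
    exact ⟨s, hsm, tendsto_atTop_mono (fun j => hksm.le_apply) tendsto_id⟩
  · left
    push_neg at hb
    obtain ⟨B, hB⟩ := hb
    have hex : ∃ v, {j | k j = v}.Infinite := by
      by_contra hfin
      push_neg at hfin
      have huniv : (Set.univ : Set ℕ).Finite := by
        have hsub : (Set.univ : Set ℕ) ⊆ ⋃ v ∈ Finset.range (B + 1), {j | k j = v} := by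
          intro j _
          exact Set.mem_biUnion (Finset.mem_range.mpr (Nat.lt_succ_of_le (hB j)))
            rfl
        exact Set.Finite.subset (Set.Finite.biUnion (Finset.range (B + 1)).finite_toSet
          fun v _ => hfin v) hsub
      exact Set.infinite_univ huniv
    obtain ⟨v, hv⟩ := hex
    exact ⟨v, Nat.nth (fun j => k j = v), Nat.nth_strictMono hv,
      fun j => Nat.nth_mem_of_infinite hv j⟩

section Normal

variable {d : ℕ} {K M : ℝ} {P : ℕ → Polynomial ℂ} {m n₀ : ℕ}

lemma normalOn_Wset (hK : 1 ≤ K) (hM : 0 ≤ M) (hP : IsBoundedSeq d K M P) (hn₀ : m ≤ n₀) :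
    NormalOn P m (Wset P m n₀ (Rc d K M)) := by
  intro k hk
  rcases subseq_const_or_tendsto k with ⟨v, s, hs, hv⟩ | ⟨s, hs, hts⟩
  · refine ⟨s, hs, Qhat P m v, fun C _ _ ε hε => ⟨0, fun j _ z _ => ?_⟩⟩
    show sphDist (Qhat P m (k (s j)) z) (Qhat P m v z) < ε
    rw [hv j, sphDist_self]
    exact hε
  · refine ⟨s, hs, fun _ => ∞, fun C hCN _ ε hε => ?_⟩
    obtain ⟨N₁, hN₁⟩ := Wset_unif hK hM hP hn₀ hε
    obtain ⟨j₀, hj₀⟩ := eventually_atTop.mp (hts.eventually_ge_atTop N₁)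
    exact ⟨j₀, fun j hj z hz => hN₁ (k (s j)) (hj₀ j hj) z (hCN hz)⟩

lemma exists_Wset_mem {z : OnePoint ℂ} (hz : z ∈ BasinInfty P m) :
    ∃ n₀, m ≤ n₀ ∧ z ∈ Wset P m n₀ (Rc d K M) := by
  cases z with
  | infty => exact ⟨m, le_rfl, infty_mem_Wset⟩
  | coe x =>
    obtain ⟨n, hn, hbig⟩ := exists_big_of_mem_basin hz
    exact ⟨n, hn, coe_mem_Wset.mpr hbig⟩

lemma basin_subset_fatou (hK : 1 ≤ K) (hM : 0 ≤ M) (hP : IsBoundedSeq d K M P) :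
    BasinInfty P m ⊆ Fatou P m := by
  intro z hz
  obtain ⟨n₀, hn₀, hzW⟩ := exists_Wset_mem hz
  exact ⟨Wset P m n₀ (Rc d K M), isOpen_Wset hK hM hP hn₀, hzW, normalOn_Wset hK hM hP hn₀⟩

lemma isOpen_basin (hK : 1 ≤ K) (hM : 0 ≤ M) (hP : IsBoundedSeq d K M P) :
    IsOpen (BasinInfty P m) := by
  rw [isOpen_iff_forall_mem_open]
  intro z hz
  obtain ⟨n₀, hn₀, hzW⟩ := exists_Wset_mem hz
  exact ⟨Wset P m n₀ (Rc d K M), Wset_subset_basin hK hM hP hn₀,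
    isOpen_Wset hK hM hP hn₀, hzW⟩

end Normal

/-- Extend a partial map on `ℂ` to the sphere, sending `∞` to `∞`. -/
noncomputable def extendSphere (f : ℂ → OnePoint ℂ) : OnePoint ℂ → OnePoint ℂ
  | (x : ℂ) => f x
  | ∞ => ∞

@[simp] lemma extendSphere_coe (f : ℂ → OnePoint ℂ) (x : ℂ) :
    extendSphere f (x : OnePoint ℂ) = f x := rfl

section Montel

variable {d : ℕ} {K M : ℝ} {P : ℕ → Polynomial ℂ} {m : ℕ}

set_option synthInstance.maxHeartbeats 1000000 in
lemma normalOn_ball (hK : 1 ≤ K) (hM : 0 ≤ M) (hP : IsBoundedSeq d K M P)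
    {z₀ : ℂ} {r : ℝ} (hr : 0 < r)
    (hball : ∀ x ∈ Metric.closedBall z₀ (2 * r), ∀ n, ‖Qc P m n x‖ ≤ Rc d K M) :
    NormalOn P m ((fun x : ℂ => (x : OnePoint ℂ)) '' Metric.ball z₀ r) := by
  classical
  have hR0 : 0 < Rc d K M := Rc_pos
  haveI : CompactSpace (Metric.closedBall z₀ r) :=
    isCompact_iff_compactSpace.mp (isCompact_closedBall _ _)
  have hderiv : ∀ (n : ℕ), ∀ w ∈ Metric.closedBall z₀ r,
      ‖deriv (Qc P m n) w‖ ≤ Rc d K M / r := by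
    intro n w hw
    apply Complex.norm_deriv_le_of_forall_mem_sphere_norm_le hr
      (differentiable_Qc P m n).diffContOnCl
    intro ζ hζ
    have hζ2 : ζ ∈ Metric.closedBall z₀ (2 * r) := by
      rw [Metric.mem_closedBall]
      have h1 : dist ζ w = r := Metric.mem_sphere.mp hζ
      have h2 : dist w z₀ ≤ r := Metric.mem_closedBall.mp hw
      calc dist ζ z₀ ≤ dist ζ w + dist w z₀ := dist_triangle _ _ _
        _ ≤ 2 * r := by rw [h1]; linarith
    exact hball ζ hζ2 n
  have hlip : ∀ (n : ℕ), ∀ x ∈ Metric.closedBall z₀ r, ∀ y ∈ Metric.closedBall z₀ r,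
      ‖Qc P m n y - Qc P m n x‖ ≤ Rc d K M / r * ‖y - x‖ := fun n x hx y hy =>
    (convex_closedBall z₀ r).norm_image_sub_le_of_norm_deriv_le
      (fun w _ => (differentiable_Qc P m n).differentiableAt) (hderiv n) hx hy
  let F : ℕ → BoundedContinuousFunction ↥(Metric.closedBall z₀ r) ℂ := fun n =>
    BoundedContinuousFunction.mkOfCompact
      ⟨fun x => Qc P m n x, (continuous_Qc P m n).comp continuous_subtype_val⟩
  have hFval : ∀ (n : ℕ) (x : ↥(Metric.closedBall z₀ r)), F n x = Qc P m n x := fun n x => rfl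
  have hin : ∀ (f : BoundedContinuousFunction ↥(Metric.closedBall z₀ r) ℂ) (x : ↥(Metric.closedBall z₀ r)),
      f ∈ Set.range F → f x ∈ Metric.closedBall (0:ℂ) (Rc d K M) := by
    rintro f x ⟨n, rfl⟩
    rw [Metric.mem_closedBall, Complex.dist_eq, sub_zero, hFval]
    exact hball x.1 (Metric.closedBall_subset_closedBall (by linarith) x.2) n
  have hequi : Equicontinuous ((↑) : Set.range F → (Metric.closedBall z₀ r) → ℂ) := by
    apply Metric.equicontinuous_of_continuity_modulus (fun t => Rc d K M / r * t)
    · have h : Tendsto (fun t : ℝ => Rc d K M / r * t) (𝓝 0) (𝓝 (Rc d K M / r * 0)) :=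
        Continuous.tendsto (by continuity) 0
      simpa using h
    · rintro x y ⟨f, ⟨n, rfl⟩⟩
      show dist (F n x) (F n y) ≤ _
      rw [hFval, hFval, Complex.dist_eq]
      have := hlip n y.1 y.2 x.1 x.2
      calc ‖Qc P m n x.1 - Qc P m n y.1‖ ≤ Rc d K M / r * ‖x.1 - y.1‖ := this
        _ = Rc d K M / r * dist (x : ℂ) (y : ℂ) := by rw [Complex.dist_eq]
        _ = Rc d K M / r * dist x y := by rw [Subtype.dist_eq]
  have hcpt : IsCompact (closure (Set.range F)) :=
    BoundedContinuousFunction.arzela_ascoli (Metric.closedBall (0:ℂ) (Rc d K M))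
      (isCompact_closedBall _ _) (Set.range F) hin hequi
  intro k hk
  have hmem : ∀ j, F (k j) ∈ closure (Set.range F) := fun j => subset_closure ⟨k j, rfl⟩
  obtain ⟨g₀, hg₀, φ, hφ, htend⟩ := hcpt.isSeqCompact hmem
  refine ⟨φ, hφ, extendSphere (fun x =>
    if hx : x ∈ Metric.closedBall z₀ r then ((g₀ ⟨x, hx⟩ : ℂ) : OnePoint ℂ) else ∞), ?_⟩
  intro C hCN _ ε hε
  rw [Metric.tendsto_atTop] at htend
  obtain ⟨j₀, hj₀⟩ := htend (ε / 4) (by positivity)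
  refine ⟨j₀, fun j hj ζ hζ => ?_⟩
  obtain ⟨x, hx, rfl⟩ := hCN hζ
  have hx' : x ∈ Metric.closedBall z₀ r := Metric.ball_subset_closedBall hx
  beta_reduce
  rw [Qhat_coe, extendSphere_coe, dif_pos hx']
  have hb := BoundedContinuousFunction.dist_coe_le_dist (f := F (k (φ j))) (g := g₀) ⟨x, hx'⟩
  have hd : dist (F (k (φ j))) g₀ < ε / 4 := hj₀ j hj
  calc sphDist ((Qc P m (k (φ j)) x : ℂ) : OnePoint ℂ) ((g₀ ⟨x, hx'⟩ : ℂ) : OnePoint ℂ)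
      ≤ 2 * ‖Qc P m (k (φ j)) x - g₀ ⟨x, hx'⟩‖ := sphDist_coe_coe_le _ _
    _ = 2 * dist (F (k (φ j)) ⟨x, hx'⟩) (g₀ ⟨x, hx'⟩) := by
        rw [Complex.dist_eq, hFval]
    _ ≤ 2 * dist (F (k (φ j))) g₀ := by linarith
    _ < ε := by linarith

lemma interior_filled_subset_fatou (hK : 1 ≤ K) (hM : 0 ≤ M) (hP : IsBoundedSeq d K M P) :
    interior (FilledJulia P m) ⊆ Fatou P m := by
  intro z hz
  have hz' : z ≠ ∞ := by
    rintro rfl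
    exact infty_not_mem_filled (interior_subset hz)
  obtain ⟨z₀, rfl⟩ : ∃ x : ℂ, (x : OnePoint ℂ) = z := by
    cases z with
    | infty => exact absurd rfl hz'
    | coe x => exact ⟨x, rfl⟩
  have hopen : IsOpen ((fun x : ℂ => (x : OnePoint ℂ)) ⁻¹' interior (FilledJulia P m)) :=
    isOpen_interior.preimage OnePoint.continuous_coe
  obtain ⟨ρ, hρ0, hρ⟩ := Metric.isOpen_iff.mp hopen z₀ hz
  have hr0 : 0 < ρ / 3 := by positivity
  refine ⟨(fun x : ℂ => (x : OnePoint ℂ)) '' Metric.ball z₀ (ρ / 3),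
    OnePoint.isOpen_image_coe.mpr Metric.isOpen_ball, ⟨z₀, Metric.mem_ball_self hr0, rfl⟩, ?_⟩
  apply normalOn_ball hK hM hP hr0
  intro x hx n
  apply abs_le_of_mem_filled hK hM hP _ n
  have hxρ : x ∈ Metric.ball z₀ ρ := by
    rw [Metric.mem_closedBall] at hx
    rw [Metric.mem_ball]
    linarith
  exact interior_subset (hρ hxρ)

end Montel
/-- The boundary of the filled Julia set at time `m` is the iterated Julia set at
time `m`: `∂K_m = J_m`. -/
theorem frontier_filledJulia_eq_julia (d : ℕ) (K M : ℝ) (hd : 2 ≤ d) (hK : 1 ≤ K)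
    (hM : 0 ≤ M) (P : ℕ → Polynomial ℂ) (hP : IsBoundedSeq d K M P) :
    ∀ m : ℕ, frontier (FilledJulia P m) = Julia P m := by
  intro m
  have hBopen : IsOpen (BasinInfty P m) := isOpen_basin hK hM hP
  have hBF : BasinInfty P m ⊆ Fatou P m := basin_subset_fatou hK hM hP
  have hIF : interior (FilledJulia P m) ⊆ Fatou P m := interior_filled_subset_fatou hK hM hP
  have hFclosed : IsClosed (FilledJulia P m) := isClosed_compl_iff.mpr hBopen
  apply subset_antisymm
  · -- frontier ⊆ Julia
    intro z hz
    by_contra hzJ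
    have hzF : z ∈ Fatou P m := not_not.mp hzJ
    have hzK : z ∈ FilledJulia P m := hFclosed.frontier_subset hz
    have hzB : z ∈ closure (BasinInfty P m) := by
      have he : frontier (FilledJulia P m) = frontier (BasinInfty P m) := by
        rw [show FilledJulia P m = (BasinInfty P m)ᶜ from rfl, frontier_compl]
      rw [he] at hz
      exact frontier_subset_closure hz
    obtain ⟨z₀, rfl⟩ : ∃ x : ℂ, (x : OnePoint ℂ) = z := by
      cases z with
      | infty => exact absurd hzK infty_not_mem_filled
      | coe x => exact ⟨x, rfl⟩
    obtain ⟨N, hNopen, hzN, hNnormal⟩ := hzF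
    obtain ⟨s, hs, g, hconv⟩ := hNnormal (fun j => m + j) fun j => Nat.le_add_right m j
    have hopen : IsOpen ((fun x : ℂ => (x : OnePoint ℂ)) ⁻¹' N) :=
      hNopen.preimage OnePoint.continuous_coe
    obtain ⟨δ₀, hδ₀, hδ₀N⟩ := Metric.isOpen_iff.mp hopen z₀ hzN
    set C := (fun x : ℂ => (x : OnePoint ℂ)) '' Metric.closedBall z₀ (δ₀ / 2) with hC
    have hCN : C ⊆ N := by
      rintro _ ⟨x, hx, rfl⟩
      apply hδ₀N
      rw [Metric.mem_ball]
      rw [Metric.mem_closedBall] at hx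
      linarith
    have hCcpt : IsCompact C := (isCompact_closedBall _ _).image OnePoint.continuous_coe
    set t := 2 / Real.sqrt (1 + Rc d K M ^ 2) with ht
    have ht0 : 0 < t := by positivity
    set ε := t / 5 with hε
    have hε0 : 0 < ε := by positivity
    obtain ⟨j₀, hj₀⟩ := hconv C hCN hCcpt ε hε0
    have hz₀C : (z₀ : OnePoint ℂ) ∈ C := ⟨z₀, Metric.mem_closedBall_self (by positivity), rfl⟩
    have hzbound : ∀ n, ‖Qc P m n z₀‖ ≤ Rc d K M :=
      abs_le_of_mem_filled hK hM hP hzK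
    -- g(z₀) is far from ∞
    have hgz : t - ε ≤ sphDist (g (z₀ : OnePoint ℂ)) ∞ := by
      have h1 : sphDist (Qhat P m (m + s j₀) (z₀ : OnePoint ℂ)) (g (z₀ : OnePoint ℂ)) < ε :=
        hj₀ j₀ le_rfl _ hz₀C
      have h2 : t ≤ sphDist (Qhat P m (m + s j₀) (z₀ : OnePoint ℂ)) ∞ := by
        rw [Qhat_coe]
        exact sphDist_infty_ge _ (hzbound _)
      have h3 := sphDist_triangle (Qhat P m (m + s j₀) (z₀ : OnePoint ℂ))
        (g (z₀ : OnePoint ℂ)) ∞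
      linarith
    -- choose a nearby basin point
    have hQcont : Continuous (Qc P m (m + s j₀)) := continuous_Qc P m _
    obtain ⟨δ, hδ0, hδ⟩ := Metric.continuous_iff.mp hQcont z₀ (ε / 2) (by positivity)
    have hδ'0 : 0 < min δ (δ₀ / 2) := lt_min hδ0 (by positivity)
    obtain ⟨w', hw'O, hw'B⟩ := mem_closure_iff.mp hzB
      ((fun x : ℂ => (x : OnePoint ℂ)) '' Metric.ball z₀ (min δ (δ₀ / 2)))
      (OnePoint.isOpen_image_coe.mpr Metric.isOpen_ball)
      ⟨z₀, Metric.mem_ball_self hδ'0, rfl⟩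
    obtain ⟨w, hwball, rfl⟩ := hw'O
    rw [Metric.mem_ball] at hwball
    have hwC : (w : OnePoint ℂ) ∈ C :=
      ⟨w, Metric.mem_closedBall.mpr (le_of_lt (lt_of_lt_of_le hwball (min_le_right _ _))), rfl⟩
    -- g(w) = ∞
    have hgw : g (w : OnePoint ℂ) = ∞ := by
      apply eq_infty_of_sphDist
      by_contra hpos
      push_neg at hpos
      obtain ⟨j₁, hj₁⟩ := hconv C hCN hCcpt (sphDist (g (w : OnePoint ℂ)) ∞ / 2) (by linarith)
      have hwB : Tendsto (fun n => sphDist (Qhat P m n (w : OnePoint ℂ)) ∞) atTop (𝓝 0) := hw'B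
      obtain ⟨n₁, hn₁⟩ := eventually_atTop.mp (hwB.eventually
        (gt_mem_nhds (show (0:ℝ) < sphDist (g (w : OnePoint ℂ)) ∞ / 2 by linarith)))
      have e1 : sphDist (Qhat P m (m + s (max j₁ n₁)) (w : OnePoint ℂ)) (g (w : OnePoint ℂ))
          < sphDist (g (w : OnePoint ℂ)) ∞ / 2 := hj₁ (max j₁ n₁) (le_max_left _ _) _ hwC
      have e2 : sphDist (Qhat P m (m + s (max j₁ n₁)) (w : OnePoint ℂ)) ∞
          < sphDist (g (w : OnePoint ℂ)) ∞ / 2 := by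
        apply hn₁
        calc n₁ ≤ max j₁ n₁ := le_max_right _ _
          _ ≤ s (max j₁ n₁) := hs.le_apply
          _ ≤ m + s (max j₁ n₁) := Nat.le_add_left _ _
      have e3 := sphDist_triangle (g (w : OnePoint ℂ))
        (Qhat P m (m + s (max j₁ n₁)) (w : OnePoint ℂ)) ∞
      have e4 := sphDist_comm (Qhat P m (m + s (max j₁ n₁)) (w : OnePoint ℂ))
        (g (w : OnePoint ℂ))
      linarith
    -- final contradiction
    have f1 : sphDist (Qhat P m (m + s j₀) (z₀ : OnePoint ℂ)) (g (z₀ : OnePoint ℂ)) < ε :=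
      hj₀ j₀ le_rfl _ hz₀C
    have f3 : sphDist (Qhat P m (m + s j₀) (w : OnePoint ℂ)) ∞ < ε := by
      have h := hj₀ j₀ le_rfl _ hwC
      rwa [hgw] at h
    have f2 : sphDist (Qhat P m (m + s j₀) (z₀ : OnePoint ℂ))
        (Qhat P m (m + s j₀) (w : OnePoint ℂ)) < ε := by
      rw [Qhat_coe, Qhat_coe]
      have hdw : dist (Qc P m (m + s j₀) w) (Qc P m (m + s j₀) z₀) < ε / 2 :=
        hδ w (lt_of_lt_of_le hwball (min_le_left _ _))
      rw [Complex.dist_eq] at hdw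
      have hb := sphDist_coe_coe_le (Qc P m (m + s j₀) z₀) (Qc P m (m + s j₀) w)
      have habs : ‖Qc P m (m + s j₀) z₀ - Qc P m (m + s j₀) w‖
          = ‖Qc P m (m + s j₀) w - Qc P m (m + s j₀) z₀‖ := by
        rw [← norm_neg]
        ring_nf
      rw [habs] at hb
      linarith
    have t1 := sphDist_triangle (g (z₀ : OnePoint ℂ))
      (Qhat P m (m + s j₀) (z₀ : OnePoint ℂ)) ∞
    have t2 := sphDist_triangle (Qhat P m (m + s j₀) (z₀ : OnePoint ℂ))
      (Qhat P m (m + s j₀) (w : OnePoint ℂ)) ∞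
    have t3 := sphDist_comm (Qhat P m (m + s j₀) (z₀ : OnePoint ℂ)) (g (z₀ : OnePoint ℂ))
    linarith
  · -- Julia ⊆ frontier
    intro z hz
    have hzF : z ∉ Fatou P m := hz
    have h1 : z ∈ FilledJulia P m := fun hB => hzF (hBF hB)
    have h2 : z ∉ interior (FilledJulia P m) := fun h => hzF (hIF h)
    rw [hFclosed.frontier_eq]
    exact ⟨h1, h2⟩
end

section
/- Let N ≥ 1 and let (U_n, u_n) be a sequence of pointed domains in the Riemann sphere ℂ̂ converging in the Carathéodory topology to a (non-degenerate) pointed domain (U, u). If for every n the complement ℂ̂ ∖ U_n has at most N connected components (i.e. each U_n is at most N-connected), then ℂ̂ ∖ U has at most N connected components, i.e. U is at most N-connected. -/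
open Filter Topology Set
open scoped OnePoint

/-- A pointed domain: an open connected subset of the Riemann sphere together with
a base point belonging to it. -/
def IsPointedDomain (U : Set (OnePoint ℂ)) (u : OnePoint ℂ) : Prop :=
  IsOpen U ∧ IsConnected U ∧ u ∈ U

/-- Carathéodory convergence of the pointed domains `(Us n, us n)` to a
(non-degenerate) pointed domain `(U, u)`:
(1) `us n → u`; (2) every compact subset of `U` is contained in `Us n` for all but
finitely many `n`; (3) every connected open set containing `u` which is contained in
infinitely many of the `Us n` is contained in `U`. -/
def CaraTendsto (Us : ℕ → Set (OnePoint ℂ)) (us : ℕ → OnePoint ℂ)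
    (U : Set (OnePoint ℂ)) (u : OnePoint ℂ) : Prop :=
  Tendsto us atTop (𝓝 u) ∧
  (∀ C : Set (OnePoint ℂ), C ⊆ U → IsCompact C → ∀ᶠ n in atTop, C ⊆ Us n) ∧
  (∀ N : Set (OnePoint ℂ), IsOpen N → IsConnected N → u ∈ N →
    {n | N ⊆ Us n}.Infinite → N ⊆ U)

/-- Carathéodory convergence of the pointed domains `(Us n, us n)` to the degenerate
pair `({u}, u)`: `us n → u` and every connected open set containing `u` is contained
in at most finitely many of the sets `Us n`. -/
def CaraTendstoDeg (Us : ℕ → Set (OnePoint ℂ)) (us : ℕ → OnePoint ℂ)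
    (u : OnePoint ℂ) : Prop :=
  Tendsto us atTop (𝓝 u) ∧
  (∀ N : Set (OnePoint ℂ), IsOpen N → IsConnected N → u ∈ N → {n | N ⊆ Us n}.Finite)

/-- The Hausdorff distance between two subsets of the Riemann sphere with respect to
the spherical metric. -/
noncomputable def sphHausdorffDist (A B : Set (OnePoint ℂ)) : ℝ :=
  max (⨆ a ∈ A, ⨅ b ∈ B, sphDist a b) (⨆ b ∈ B, ⨅ a ∈ A, sphDist a b)

section CaraAux
open Metric


private lemma onePoint_norm_aux (w : ℂ) (s : ℝ) (hs : s < 1) :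
    ‖w / ((1:ℂ) - (s:ℝ))‖ = ‖w‖ / (1 - s) := by
  rw [norm_div, show ((1:ℂ) - (s:ℝ)) = (((1 - s : ℝ)):ℂ) by push_cast; ring,
    Complex.norm_real]
  rw [Real.norm_eq_abs, abs_of_pos (by linarith)]

private lemma onePoint_infty_nbhd_pathConnected {r : ℝ} (hr : 0 < r) :
    IsPathConnected ((((↑) : ℂ → OnePoint ℂ) '' (Metric.closedBall (0:ℂ) r)ᶜ) ∪ {∞}) := by
  set A : Set (OnePoint ℂ) :=
    (((↑) : ℂ → OnePoint ℂ) '' (Metric.closedBall (0:ℂ) r)ᶜ) ∪ {∞} with hA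
  have hinf : (∞ : OnePoint ℂ) ∈ A := Or.inr rfl
  have key : ∀ w : ℂ, w ∈ (Metric.closedBall (0:ℂ) r)ᶜ → JoinedIn A (w : OnePoint ℂ) ∞ := by
    intro w hw
    have hwn : r < ‖w‖ := by
      simpa [Metric.mem_closedBall, dist_zero_right, not_le] using hw
    have hwpos : 0 < ‖w‖ := lt_trans hr hwn
    set g : unitInterval → OnePoint ℂ := fun t =>
      if (t : ℝ) < 1 then ((w / ((1:ℂ) - ((t : ℝ) : ℂ))) : OnePoint ℂ) else ∞ with hg
    have hmemg : ∀ t : unitInterval, g t ∈ A := by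
      intro t
      by_cases ht : (t : ℝ) < 1
      · have ht0 : (0:ℝ) < 1 - (t:ℝ) := by linarith
        have ht1 : 1 - (t:ℝ) ≤ 1 := by have := t.2.1; linarith
        have hgeq : g t = ((w / ((1:ℂ) - ((t : ℝ) : ℂ))) : OnePoint ℂ) := if_pos ht
        rw [hgeq]
        refine Or.inl ⟨w / ((1:ℂ) - ((t : ℝ) : ℂ)), ?_, rfl⟩
        simp only [mem_compl_iff, Metric.mem_closedBall, dist_zero_right, not_le]
        rw [onePoint_norm_aux w _ ht]
        calc r < ‖w‖ := hwn
        _ ≤ ‖w‖ / (1 - (t:ℝ)) := by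
              rw [le_div_iff₀ ht0]
              exact mul_le_of_le_one_right hwpos.le ht1
      · exact Or.inr (show g t = ∞ from if_neg ht)
    have hcont : Continuous g := by
      rw [continuous_iff_continuousAt]
      intro t
      by_cases ht : (t : ℝ) < 1
      · have hopen : IsOpen {s : unitInterval | (s : ℝ) < 1} :=
          isOpen_lt continuous_subtype_val continuous_const
        have hev : ∀ᶠ s in 𝓝 t, (fun s : unitInterval =>
            ((w / ((1:ℂ) - ((s : ℝ) : ℂ))) : OnePoint ℂ)) s = g s := by
          filter_upwards [hopen.mem_nhds ht] with s hs
          exact (if_pos hs).symm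
        have hden : ((1:ℂ) - ((t : ℝ) : ℂ)) ≠ 0 := by
          rw [sub_ne_zero]
          intro h
          have h' : (1:ℝ) = (t:ℝ) := by exact_mod_cast h
          linarith
        have hc : ContinuousAt (fun s : unitInterval =>
            ((w / ((1:ℂ) - ((s : ℝ) : ℂ))) : OnePoint ℂ)) t := by
          apply OnePoint.continuous_coe.continuousAt.comp
          exact (continuousAt_const.div
            (continuous_const.sub (Complex.continuous_ofReal.comp
              continuous_subtype_val)).continuousAt hden)
        exact hc.congr hev
      · have ht1 : (t : ℝ) = 1 := le_antisymm t.2.2 (not_lt.mp ht)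
        have hgt : g t = ∞ := if_neg ht
        rw [ContinuousAt, hgt, ← nhdsNE_sup_pure t, tendsto_sup]
        constructor
        · have hev : ∀ᶠ s : unitInterval in 𝓝[≠] t, (s : ℝ) < 1 := by
            refine eventually_nhdsWithin_of_forall fun s hs => ?_
            exact lt_of_le_of_ne s.2.2 fun h => hs (Subtype.ext (h.trans ht1.symm))
          have hnormt : Tendsto (fun s : unitInterval => ‖w / ((1:ℂ) - ((s : ℝ) : ℂ))‖)
              (𝓝[≠] t) atTop := by
            have h1 : Tendsto (fun s : unitInterval => 1 - (s : ℝ)) (𝓝[≠] t) (𝓝[>] 0) := by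
              rw [tendsto_nhdsWithin_iff]
              constructor
              · have : Tendsto (fun s : unitInterval => 1 - (s : ℝ)) (𝓝 t) (𝓝 (1 - (t:ℝ))) :=
                  (continuous_const.sub continuous_subtype_val).tendsto t
                rw [ht1] at this
                simpa using this.mono_left nhdsWithin_le_nhds
              · filter_upwards [hev] with s hs
                simpa using hs
            have h2 : Tendsto (fun x : ℝ => ‖w‖ * x⁻¹) (𝓝[>] 0) atTop :=
              tendsto_inv_nhdsGT_zero.const_mul_atTop hwpos
            apply Tendsto.congr' _ (h2.comp h1)
            filter_upwards [hev] with s hs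
            simp only [Function.comp_apply]
            rw [onePoint_norm_aux w _ hs, div_eq_mul_inv]
          have hcb : Tendsto (fun s : unitInterval => w / ((1:ℂ) - ((s : ℝ) : ℂ)))
              (𝓝[≠] t) (coclosedCompact ℂ) := by
            rw [coclosedCompact_eq_cocompact, ← Metric.cobounded_eq_cocompact]
            exact tendsto_norm_atTop_iff_cobounded.mp hnormt
          apply Tendsto.congr' _ (OnePoint.tendsto_coe_infty.comp hcb)
          filter_upwards [hev] with s hs
          exact (if_pos hs).symm
        · exact hgt ▸ tendsto_pure_nhds g t
    have hg0 : g 0 = (w : OnePoint ℂ) := by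
      rw [hg]; norm_num
    have hg1 : g 1 = ∞ := by
      have h1 : ¬ ((1 : unitInterval) : ℝ) < 1 := by norm_num
      exact if_neg h1
    exact ⟨{ toFun := g, continuous_toFun := hcont, source' := hg0, target' := hg1 }, hmemg⟩
  refine ⟨∞, hinf, ?_⟩
  rintro y (⟨w, hw, rfl⟩ | rfl)
  · exact (key w hw).symm
  · exact JoinedIn.refl hinf

instance : LocallyPathConnectedSpace (OnePoint ℂ) := by
  refine LocallyPathConnectedSpace.of_bases (ι := ℝ) (p := fun _ r => 0 < r)
    (s := fun x r => Option.elim x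
      ((((↑) : ℂ → OnePoint ℂ) '' (Metric.closedBall (0:ℂ) r)ᶜ) ∪ {∞})
      (fun z => ((↑) : ℂ → OnePoint ℂ) '' Metric.ball z r)) ?_ ?_
  · intro x
    induction x using OnePoint.rec with
    | infty =>
      have : HasBasis (𝓝 (∞ : OnePoint ℂ)) (fun r : ℝ => 0 < r)
          (fun r => (((↑) : ℂ → OnePoint ℂ) '' (Metric.closedBall (0:ℂ) r)ᶜ) ∪ {∞}) := by
        refine OnePoint.hasBasis_nhds_infty.to_hasBasis ?_ ?_
        · rintro s ⟨hscl, hscpt⟩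
          obtain ⟨R, hR⟩ := hscpt.isBounded.subset_closedBall 0
          refine ⟨max R 1, lt_of_lt_of_le one_pos (le_max_right R 1), ?_⟩
          apply Set.union_subset_union_left
          apply Set.image_mono
          apply Set.compl_subset_compl.mpr
          exact hR.trans (Metric.closedBall_subset_closedBall (le_max_left R 1))
        · intro r _
          exact ⟨Metric.closedBall 0 r, ⟨Metric.isClosed_closedBall, isCompact_closedBall _ _⟩,
            subset_rfl⟩
      exact this
    | coe z =>
      have : HasBasis (𝓝 ((z : OnePoint ℂ))) (fun r : ℝ => 0 < r)
          (fun r => ((↑) : ℂ → OnePoint ℂ) '' Metric.ball z r) := by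
        rw [OnePoint.nhds_coe_eq]
        exact Metric.nhds_basis_ball.map _
      exact this
  · intro x r hr
    induction x using OnePoint.rec with
    | infty => exact onePoint_infty_nbhd_pathConnected hr
    | coe z =>
      exact ((convex_ball z r).isPathConnected (by simp [hr])).image OnePoint.continuous_coe
private lemma inter_eq_empty_elim {α : Type*} {s t : Set α} (h : s ∩ t = ∅) {x : α}
    (hs : x ∈ s) (ht : x ∈ t) : False :=
  Set.eq_empty_iff_forall_notMem.mp h x ⟨hs, ht⟩

end CaraAux
/-- Connectivity cannot increase under Carathéodory limits: if each `Us n` is at most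
`N`-connected (its complement has at most `N` connected components) and
`(Us n, us n) → (U, u)` in the Carathéodory topology with `(U, u)` a pointed domain,
then `U` is at most `N`-connected. -/
theorem caraTendsto_connectivity_le (N : ℕ) (hN : 1 ≤ N)
    (Us : ℕ → Set (OnePoint ℂ)) (us : ℕ → OnePoint ℂ)
    (hUs : ∀ n, IsPointedDomain (Us n) (us n))
    (U : Set (OnePoint ℂ)) (u : OnePoint ℂ) (hU : IsPointedDomain U u)
    (hconv : CaraTendsto Us us U u)
    (hcc : ∀ n, ∃ s : Finset (Set (OnePoint ℂ)), s.card ≤ N ∧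
      ∀ z ∈ (Us n)ᶜ, connectedComponentIn (Us n)ᶜ z ∈ s) :
    ∃ s : Finset (Set (OnePoint ℂ)), s.card ≤ N ∧
      ∀ z ∈ Uᶜ, connectedComponentIn Uᶜ z ∈ s := by
  classical
  by_contra hfail
  obtain ⟨hUo, hUc, huU⟩ := hU
  obtain ⟨-, hcpt, hker⟩ := hconv
  set K : Set (OnePoint ℂ) := Uᶜ with hKdef
  have hKclosed : IsClosed K := hUo.isClosed_compl
  have hKcpt : IsCompact K := hKclosed.isCompact
  haveI : CompactSpace K := isCompact_iff_compactSpace.mp hKcpt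
  -- extract N+1 points of K lying in pairwise distinct connected components of K
  have hbig : ∃ t : Finset (Set (OnePoint ℂ)),
      (↑t : Set (Set (OnePoint ℂ))) ⊆ (fun z => connectedComponentIn K z) '' K ∧
      t.card = N + 1 := by
    set 𝒞 : Set (Set (OnePoint ℂ)) := (fun z => connectedComponentIn K z) '' K with h𝒞
    by_cases hfin : 𝒞.Finite
    · have hcard : N + 1 ≤ hfin.toFinset.card := by
        by_contra hle
        exact hfail ⟨hfin.toFinset, by omega, fun z hz => hfin.mem_toFinset.mpr ⟨z, hz, rfl⟩⟩
      obtain ⟨t, hts, htc⟩ := Finset.exists_subset_card_eq hcard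
      exact ⟨t, fun x hx => hfin.mem_toFinset.mp (hts hx), htc⟩
    · exact Set.Infinite.exists_subset_card_eq hfin (N + 1)
  obtain ⟨t, ht𝒞, htc⟩ := hbig
  have hpts : ∀ c ∈ t, ∃ z, z ∈ K ∧ connectedComponentIn K z = c := fun c hc => by
    obtain ⟨z, hz, hzc⟩ := ht𝒞 hc; exact ⟨z, hz, hzc⟩
  choose zfun hzfunK hzfunc using hpts
  have e : Fin (N + 1) ≃ {x // x ∈ t} := (finCongr htc.symm).trans t.equivFin.symm
  set z : Fin (N + 1) → OnePoint ℂ := fun i => zfun (e i).1 (e i).2 with hz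
  have hzK : ∀ i, z i ∈ K := fun i => hzfunK _ _
  have hzdist : ∀ i j, i ≠ j →
      connectedComponentIn K (z i) ≠ connectedComponentIn K (z j) := by
    intro i j hij h
    rw [hzfunc _ (e i).2, hzfunc _ (e j).2] at h
    exact hij (e.injective (Subtype.ext h))
  -- pass to the subspace K
  set ci : Fin (N + 1) → K := fun i => ⟨z i, hzK i⟩ with hci
  have hcomp_ne : ∀ i j, i ≠ j → connectedComponent (ci i) ≠ connectedComponent (ci j) := by
    intro i j hij h
    apply hzdist i j hij
    rw [connectedComponentIn_eq_image (hzK i), connectedComponentIn_eq_image (hzK j)]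
    exact congrArg _ h
  -- clopen separation
  have sep : ∀ i j : Fin (N + 1), ∃ Z : Set K, IsClopen Z ∧ (i ≠ j → ci i ∈ Z ∧ ci j ∉ Z) := by
    intro i j
    by_cases hij : i = j
    · exact ⟨∅, isClopen_empty, fun h => absurd hij h⟩
    · have hnot : ci j ∉ connectedComponent (ci i) := fun hmem =>
        hcomp_ne i j hij (connectedComponent_eq hmem)
      rw [connectedComponent_eq_iInter_isClopen] at hnot
      simp only [Set.mem_iInter, not_forall] at hnot
      obtain ⟨⟨Z, hZcl, hZi⟩, hZj⟩ := hnot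
      exact ⟨Z, hZcl, fun _ => ⟨hZi, hZj⟩⟩
  choose Z hZcl hZmem using sep
  set W : Fin (N + 1) → Fin (N + 1) → Set K :=
    fun i j => if i < j then Z i j else (Z j i)ᶜ with hW
  have hWcl : ∀ i j, IsClopen (W i j) := by
    intro i j
    simp only [hW]
    split
    · exact hZcl i j
    · exact (hZcl j i).compl
  have hWmem : ∀ i j, i ≠ j → ci i ∈ W i j := by
    intro i j hij
    simp only [hW]
    split
    · exact (hZmem i j hij).1
    · exact fun hmem => (hZmem j i hij.symm).2 hmem
  have hWnot : ∀ i j, i ≠ j → ci j ∉ W i j := by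
    intro i j hij
    simp only [hW]
    split
    · exact (hZmem i j hij).2
    · exact fun hmem => hmem (hZmem j i hij.symm).1
  have hWdisj : ∀ i j, i ≠ j → W i j ∩ W j i = ∅ := by
    intro i j hij
    rcases hij.lt_or_gt with h | h
    · rw [show W i j = Z i j from if_pos h, show W j i = (Z i j)ᶜ from if_neg (not_lt.mpr h.le),
        Set.inter_compl_self]
    · rw [show W i j = (Z j i)ᶜ from if_neg (not_lt.mpr h.le), show W j i = Z j i from if_pos h,
        Set.compl_inter_self]
  set T : Fin (N + 1) → Set K := fun i => ⋂ j, ⋂ (_ : j ≠ i), W i j with hT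
  have hTcl : ∀ i, IsClopen (T i) :=
    fun i => ⟨isClosed_iInter fun j => isClosed_iInter fun _ => (hWcl i j).1,
      isOpen_iInter_of_finite fun j => isOpen_iInter_of_finite fun _ => (hWcl i j).2⟩
  have hTmem : ∀ i, ci i ∈ T i := fun i =>
    Set.mem_iInter.mpr fun j => Set.mem_iInter.mpr fun hj => hWmem i j hj.symm
  have hTsub : ∀ i j, j ≠ i → T i ⊆ W i j := fun i j hj x hx =>
    Set.mem_iInter.mp (Set.mem_iInter.mp hx j) hj
  have hTdisj : ∀ i j, i ≠ j → T i ∩ T j = ∅ := by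
    intro i j hij
    rw [Set.eq_empty_iff_forall_notMem]
    rintro x ⟨hxi, hxj⟩
    have h1 : x ∈ W i j := hTsub i j hij.symm hxi
    have h2 : x ∈ W j i := hTsub j i hij hxj
    exact inter_eq_empty_elim (hWdisj i j hij) h1 h2
  set lst : Fin (N + 1) := Fin.last N with hlst
  set T' : Fin (N + 1) → Set K :=
    fun i => if i = lst then (⋃ j, ⋃ (_ : j ≠ lst), T j)ᶜ else T i with hT'
  have hT'cl : ∀ i, IsClopen (T' i) := by
    intro i
    simp only [hT']
    split
    · exact ⟨(isOpen_iUnion fun j => isOpen_iUnion fun _ => (hTcl j).2).isClosed_compl,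
        (isClosed_iUnion_of_finite fun j => isClosed_iUnion_of_finite fun _ =>
          (hTcl j).1).isOpen_compl⟩
    · exact hTcl i
  have hT'mem : ∀ i, ci i ∈ T' i := by
    intro i
    simp only [hT']
    split
    · next h =>
      simp only [Set.mem_compl_iff, Set.mem_iUnion, not_exists]
      intro j hj hmem
      exact hWnot j i (fun hji => hj (hji.trans h)) (hTsub j i (fun hij => hj (hij ▸ h)) hmem)
    · exact hTmem i
  have hT'disj : ∀ i j, i ≠ j → T' i ∩ T' j = ∅ := by
    intro i j hij
    rw [Set.eq_empty_iff_forall_notMem]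
    rintro x ⟨hxi, hxj⟩
    by_cases hi : i = lst
    · have hj : j ≠ lst := fun h => hij (hi.trans h.symm)
      rw [show T' i = (⋃ j, ⋃ (_ : j ≠ lst), T j)ᶜ from if_pos hi] at hxi
      rw [show T' j = T j from if_neg hj] at hxj
      exact hxi (Set.mem_iUnion.mpr ⟨j, Set.mem_iUnion.mpr ⟨hj, hxj⟩⟩)
    · by_cases hjl : j = lst
      · rw [show T' j = (⋃ j, ⋃ (_ : j ≠ lst), T j)ᶜ from if_pos hjl] at hxj
        rw [show T' i = T i from if_neg hi] at hxi
        exact hxj (Set.mem_iUnion.mpr ⟨i, Set.mem_iUnion.mpr ⟨hi, hxi⟩⟩)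
      · rw [show T' i = T i from if_neg hi] at hxi
        rw [show T' j = T j from if_neg hjl] at hxj
        exact inter_eq_empty_elim (hTdisj i j hij) hxi hxj
  have hT'union : (⋃ i, T' i) = Set.univ := by
    rw [Set.eq_univ_iff_forall]
    intro x
    by_cases hx : x ∈ ⋃ j, ⋃ (_ : j ≠ lst), T j
    · obtain ⟨j, hj⟩ := Set.mem_iUnion.mp hx
      obtain ⟨hjl, hxj⟩ := Set.mem_iUnion.mp hj
      exact Set.mem_iUnion.mpr ⟨j, by rw [show T' j = T j from if_neg hjl]; exact hxj⟩
    · exact Set.mem_iUnion.mpr ⟨lst, by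
        rw [show T' lst = (⋃ j, ⋃ (_ : j ≠ lst), T j)ᶜ from if_pos rfl]; exact hx⟩
  -- transfer to the whole sphere
  set Kp : Fin (N + 1) → Set (OnePoint ℂ) := fun i => Subtype.val '' T' i with hKp
  have hKpK : ∀ i, Kp i ⊆ K := fun i x hx => by
    obtain ⟨a, _, rfl⟩ := hx; exact a.2
  have hKpcpt : ∀ i, IsCompact (Kp i) := fun i =>
    ((hT'cl i).isClosed.isCompact).image continuous_subtype_val
  have hKpclosed : ∀ i, IsClosed (Kp i) := fun i => (hKpcpt i).isClosed
  have hzKp : ∀ i, z i ∈ Kp i := fun i => ⟨ci i, hT'mem i, rfl⟩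
  have hKpdisj : ∀ i j, i ≠ j → Kp i ∩ Kp j = ∅ := by
    intro i j hij
    rw [Set.eq_empty_iff_forall_notMem]
    rintro x ⟨⟨a, ha, rfl⟩, ⟨b, hb, hba⟩⟩
    have hba' : b = a := Subtype.val_injective hba
    subst hba'
    exact inter_eq_empty_elim (hT'disj i j hij) ha hb
  have hKpunion : (⋃ i, Kp i) = K := by
    simp only [hKp, ← Set.image_iUnion, hT'union, Set.image_univ, Subtype.range_coe_subtype]
    rfl
  -- each piece meets the closure of U
  have hmeet : ∀ i, (Kp i ∩ closure U).Nonempty := by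
    intro i
    by_contra hempty
    rw [Set.not_nonempty_iff_eq_empty, Set.eq_empty_iff_forall_notMem] at hempty
    have hopen : IsOpen (Kp i) := by
      rw [isOpen_iff_mem_nhds]
      intro x hx
      have hOopen : IsOpen ((closure U)ᶜ ∩ (⋃ j, ⋃ (_ : j ≠ i), Kp j)ᶜ) :=
        (isClosed_closure.isOpen_compl).inter
          (isClosed_iUnion_of_finite fun j => isClosed_iUnion_of_finite fun _ =>
            hKpclosed j).isOpen_compl
      have hxO : x ∈ (closure U)ᶜ ∩ (⋃ j, ⋃ (_ : j ≠ i), Kp j)ᶜ := by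
        constructor
        · exact fun hxcl => hempty x ⟨hx, hxcl⟩
        · simp only [Set.mem_compl_iff, Set.mem_iUnion, not_exists]
          intro j hj hxj
          exact inter_eq_empty_elim (hKpdisj j i hj) hxj hx
      refine Filter.mem_of_superset (hOopen.mem_nhds hxO) ?_
      rintro y ⟨hy1, hy2⟩
      have hyK : y ∈ K := fun hyU => hy1 (subset_closure hyU)
      rw [← hKpunion] at hyK
      obtain ⟨j, hyj⟩ := Set.mem_iUnion.mp hyK
      by_cases hji : j = i
      · exact hji ▸ hyj
      · exact absurd (Set.mem_iUnion.mpr ⟨j, Set.mem_iUnion.mpr ⟨hji, hyj⟩⟩) hy2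
    rcases isClopen_iff.mp ⟨hKpclosed i, hopen⟩ with h | h
    · exact (Set.eq_empty_iff_forall_notMem.mp h (z i)) (hzKp i)
    · exact (hKpK i (h ▸ Set.mem_univ u : u ∈ Kp i)) huU
  choose y hy using hmeet
  have hyKp : ∀ i, y i ∈ Kp i := fun i => (hy i).1
  have hycl : ∀ i, y i ∈ closure U := fun i => (hy i).2
  -- connected compact sets P i joining u to y i avoiding the other pieces
  set G : Fin (N + 1) → Set (OnePoint ℂ) := fun i => (⋃ j, ⋃ (_ : j ≠ i), Kp j)ᶜ with hG
  have hGopen : ∀ i, IsOpen (G i) := fun i =>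
    (isClosed_iUnion_of_finite fun j => isClosed_iUnion_of_finite fun _ =>
      hKpclosed j).isOpen_compl
  have hUG : ∀ i, U ⊆ G i := by
    intro i x hx
    simp only [hG, Set.mem_compl_iff, Set.mem_iUnion, not_exists]
    intro j _ hxj
    exact (hKpK j hxj) hx
  have huG : ∀ i, u ∈ G i := fun i => hUG i huU
  set Om : Fin (N + 1) → Set (OnePoint ℂ) := fun i => connectedComponentIn (G i) u with hOm
  have hOmopen : ∀ i, IsOpen (Om i) := fun i => (hGopen i).connectedComponentIn
  have hOmconn : ∀ i, IsConnected (Om i) := fun i =>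
    isConnected_connectedComponentIn_iff.mpr (huG i)
  have hyG : ∀ i, y i ∈ G i := by
    intro i
    simp only [hG, Set.mem_compl_iff, Set.mem_iUnion, not_exists]
    intro j hj hyj
    exact inter_eq_empty_elim (hKpdisj j i hj) hyj (hyKp i)
  have hyOm : ∀ i, y i ∈ Om i := by
    intro i
    have hUOm : U ⊆ Om i := hUc.isPreconnected.subset_connectedComponentIn huU (hUG i)
    have hpre : IsPreconnected (Om i ∪ {y i}) := by
      apply IsPreconnected.subset_closure (isPreconnected_connectedComponentIn)
        Set.subset_union_left
      apply Set.union_subset subset_closure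
      rw [Set.singleton_subset_iff]
      exact closure_mono hUOm (hycl i)
    have hsub : Om i ∪ {y i} ⊆ G i :=
      Set.union_subset (connectedComponentIn_subset _ _)
        (Set.singleton_subset_iff.mpr (hyG i))
    have := hpre.subset_connectedComponentIn
      (Set.mem_union_left _ (mem_connectedComponentIn (huG i))) hsub
    exact this (Set.mem_union_right _ rfl)
  have hpath : ∀ i, ∃ P : Set (OnePoint ℂ), IsCompact P ∧ IsPreconnected P ∧
      u ∈ P ∧ y i ∈ P ∧ P ⊆ G i := by
    intro i
    have hpc := (hOmopen i).isConnected_iff_isPathConnected.mp (hOmconn i)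
    obtain ⟨γ, hγ⟩ := hpc.joinedIn u (mem_connectedComponentIn (huG i)) (y i) (hyOm i)
    exact ⟨Set.range γ, isCompact_range γ.continuous,
      (isConnected_range γ.continuous).isPreconnected,
      ⟨0, γ.source⟩, ⟨1, γ.target⟩,
      (Set.range_subset_iff.mpr hγ).trans (connectedComponentIn_subset _ _)⟩
  choose P hPcpt hPconn huP hyP hPG using hpath
  have hPKp : ∀ i j, i ≠ j → P i ∩ Kp j = ∅ := by
    intro i j hij
    rw [Set.eq_empty_iff_forall_notMem]
    rintro x ⟨hxP, hxK⟩
    exact (hPG i hxP) (Set.mem_iUnion.mpr ⟨j, Set.mem_iUnion.mpr ⟨hij.symm, hxK⟩⟩)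
  -- pairwise disjoint open neighborhoods of the pieces whose closures avoid the other paths
  have sepn : ∀ i j : Fin (N + 1), ∃ O₁ O₂ : Set (OnePoint ℂ), IsOpen O₁ ∧ IsOpen O₂ ∧
      (i ≠ j → Kp i ⊆ O₁ ∧ Kp j ⊆ O₂ ∧ O₁ ∩ O₂ = ∅) := by
    intro i j
    by_cases hij : i = j
    · exact ⟨∅, ∅, isOpen_empty, isOpen_empty, fun h => absurd hij h⟩
    · obtain ⟨O₁, O₂, hO₁, hO₂, hs₁, hs₂, hd⟩ :=
        SeparatedNhds.of_isCompact_isCompact (hKpcpt i) (hKpcpt j)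
          (Set.disjoint_iff_inter_eq_empty.mpr (hKpdisj i j hij))
      exact ⟨O₁, O₂, hO₁, hO₂, fun _ => ⟨hs₁, hs₂, Set.disjoint_iff_inter_eq_empty.mp hd⟩⟩
  choose O₁ O₂ hO₁ hO₂ hOprop using sepn
  set Wo : Fin (N + 1) → Fin (N + 1) → Set (OnePoint ℂ) :=
    fun i j => if i < j then O₁ i j else O₂ j i with hWo
  have hWoopen : ∀ i j, IsOpen (Wo i j) := by
    intro i j; simp only [hWo]; split
    · exact hO₁ i j
    · exact hO₂ j i
  have hWomem : ∀ i j, i ≠ j → Kp i ⊆ Wo i j := by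
    intro i j hij
    simp only [hWo]; split
    · exact (hOprop i j hij).1
    · exact (hOprop j i hij.symm).2.1
  have hWodisj : ∀ i j, i ≠ j → Wo i j ∩ Wo j i = ∅ := by
    intro i j hij
    rcases hij.lt_or_gt with h | h
    · rw [show Wo i j = O₁ i j from if_pos h,
        show Wo j i = O₂ i j from if_neg (not_lt.mpr h.le)]
      exact (hOprop i j hij).2.2
    · rw [show Wo i j = O₂ j i from if_neg (not_lt.mpr h.le),
        show Wo j i = O₁ j i from if_pos h, Set.inter_comm]
      exact (hOprop j i hij.symm).2.2
  set Wn : Fin (N + 1) → Set (OnePoint ℂ) := fun i => ⋂ j, ⋂ (_ : j ≠ i), Wo i j with hWn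
  have hWnopen : ∀ i, IsOpen (Wn i) := fun i =>
    isOpen_iInter_of_finite fun j => isOpen_iInter_of_finite fun _ => hWoopen i j
  have hWnmem : ∀ i, Kp i ⊆ Wn i := fun i x hx =>
    Set.mem_iInter.mpr fun j => Set.mem_iInter.mpr fun hj => hWomem i j hj.symm hx
  have hWndisj : ∀ i j, i ≠ j → Wn i ∩ Wn j = ∅ := by
    intro i j hij
    rw [Set.eq_empty_iff_forall_notMem]
    rintro x ⟨hxi, hxj⟩
    have h1 : x ∈ Wo i j := Set.mem_iInter.mp (Set.mem_iInter.mp hxi j) hij.symm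
    have h2 : x ∈ Wo j i := Set.mem_iInter.mp (Set.mem_iInter.mp hxj i) hij
    exact inter_eq_empty_elim (hWodisj i j hij) h1 h2
  set Q : Fin (N + 1) → Set (OnePoint ℂ) := fun i => ⋃ j, ⋃ (_ : j ≠ i), P j with hQ
  have hQclosed : ∀ i, IsClosed (Q i) := fun i =>
    isClosed_iUnion_of_finite fun j => isClosed_iUnion_of_finite fun _ => (hPcpt j).isClosed
  have hKpQ : ∀ i, Kp i ∩ Q i = ∅ := by
    intro i
    rw [Set.eq_empty_iff_forall_notMem]
    rintro x ⟨hxK, hxQ⟩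
    obtain ⟨j, hj⟩ := Set.mem_iUnion.mp hxQ
    obtain ⟨hji, hxP⟩ := Set.mem_iUnion.mp hj
    exact inter_eq_empty_elim (hPKp j i hji) hxP hxK
  have hVex : ∀ i, ∃ V : Set (OnePoint ℂ), IsOpen V ∧ Kp i ⊆ V ∧
      closure V ⊆ Wn i ∩ (Q i)ᶜ := by
    intro i
    apply normal_exists_closure_subset (hKpclosed i)
      ((hWnopen i).inter (hQclosed i).isOpen_compl)
    intro x hx
    refine ⟨hWnmem i hx, fun hxQ => ?_⟩
    exact inter_eq_empty_elim (hKpQ i) hx hxQ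
  choose V hVopen hKpV hVcl using hVex
  have hVdisj : ∀ i j, i ≠ j → V i ∩ V j = ∅ := by
    intro i j hij
    rw [Set.eq_empty_iff_forall_notMem]
    rintro x ⟨hxi, hxj⟩
    have h1 : x ∈ Wn i := (hVcl i (subset_closure hxi)).1
    have h2 : x ∈ Wn j := (hVcl j (subset_closure hxj)).1
    exact inter_eq_empty_elim (hWndisj i j hij) h1 h2
  have hclVP : ∀ i j, j ≠ i → closure (V j) ∩ P i = ∅ := by
    intro i j hji
    rw [Set.eq_empty_iff_forall_notMem]
    rintro x ⟨hxV, hxP⟩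
    exact (hVcl j hxV).2 (Set.mem_iUnion.mpr ⟨i, Set.mem_iUnion.mpr ⟨hji.symm, hxP⟩⟩)
  -- the compact set E
  set E : Set (OnePoint ℂ) := (⋃ i, V i)ᶜ with hE
  have hEcpt : IsCompact E := (isOpen_iUnion fun i => hVopen i).isClosed_compl.isCompact
  have hEU : E ⊆ U := by
    intro x hx
    by_contra hxU
    have hxK : x ∈ K := hxU
    rw [← hKpunion] at hxK
    obtain ⟨i, hxi⟩ := Set.mem_iUnion.mp hxK
    exact hx (Set.mem_iUnion.mpr ⟨i, hKpV i hxi⟩)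
  have hEfin : {n : ℕ | ¬ E ⊆ Us n}.Finite := by
    have h := hcpt E hEU hEcpt
    rw [← Nat.cofinite_eq_atTop] at h
    exact Filter.eventually_cofinite.mp h
  -- for each i, only finitely many n can contain both E and V i
  have hbadfin : ∀ i, {n : ℕ | E ⊆ Us n ∧ V i ⊆ Us n}.Finite := by
    intro i
    by_contra hinf
    have hinf' : {n : ℕ | E ⊆ Us n ∧ V i ⊆ Us n}.Infinite := hinf
    set A' : Set (OnePoint ℂ) := ⋃ j, ⋃ (_ : j ≠ i), closure (V j) with hA'
    have hA'cl : IsClosed A' :=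
      isClosed_iUnion_of_finite fun j => isClosed_iUnion_of_finite fun _ => isClosed_closure
    have hPA' : P i ⊆ A'ᶜ := by
      intro x hx
      simp only [hA', Set.mem_compl_iff, Set.mem_iUnion, not_exists]
      intro j hj hxj
      exact inter_eq_empty_elim (hclVP i j hj) hxj hx
    set Om' : Set (OnePoint ℂ) := connectedComponentIn A'ᶜ u with hOm'
    have huA' : u ∈ A'ᶜ := hPA' (huP i)
    have hOm'open : IsOpen Om' := hA'cl.isOpen_compl.connectedComponentIn
    have hOm'conn : IsConnected Om' := isConnected_connectedComponentIn_iff.mpr huA'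
    have hPOm' : P i ⊆ Om' := (hPconn i).subset_connectedComponentIn (huP i) hPA'
    have hyOm' : y i ∈ Om' := hPOm' (hyP i)
    have hsubn : {n : ℕ | Om' ⊆ Us n}.Infinite := by
      apply hinf'.mono
      rintro n ⟨hEn, hVn⟩
      intro x hx
      by_contra hxn
      have hxE : x ∉ E := fun hxE => hxn (hEn hxE)
      have hxU : x ∈ ⋃ j, V j := by
        by_contra hxV
        exact hxE hxV
      obtain ⟨j, hxj⟩ := Set.mem_iUnion.mp hxU
      have hji : j ≠ i := by
        rintro rfl
        exact hxn (hVn hxj)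
      have hxA' : x ∈ A' :=
        Set.mem_iUnion.mpr ⟨j, Set.mem_iUnion.mpr ⟨hji, subset_closure hxj⟩⟩
      exact (connectedComponentIn_subset _ _ hx) hxA'
    have hOm'U : Om' ⊆ U := hker Om' hOm'open hOm'conn (mem_connectedComponentIn huA') hsubn
    exact (hKpK i (hyKp i)) (hOm'U hyOm')
  -- choose a good index n
  have hallfin : ({n : ℕ | ¬ E ⊆ Us n} ∪ ⋃ i, {n : ℕ | E ⊆ Us n ∧ V i ⊆ Us n}).Finite :=
    hEfin.union (Set.finite_iUnion hbadfin)
  obtain ⟨n, hn⟩ := hallfin.infinite_compl.nonempty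
  simp only [Set.mem_compl_iff, Set.mem_union, Set.mem_iUnion, not_or, not_exists] at hn
  obtain ⟨hnE, hnV⟩ := hn
  have hEn : E ⊆ Us n := not_not.mp hnE
  have hVn : ∀ i, ¬ V i ⊆ Us n := fun i h => hnV i ⟨hEn, h⟩
  -- now (Us n)ᶜ has at least N+1 components
  have hw : ∀ i, ∃ w, w ∈ V i ∧ w ∉ Us n := fun i => Set.not_subset.mp (hVn i)
  choose w hwV hwn using hw
  have hwc : ∀ i, w i ∈ (Us n)ᶜ := hwn
  have hcompl : (Us n)ᶜ ⊆ ⋃ j, V j := by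
    intro x hx
    by_contra hxV
    exact hx (hEn hxV)
  set D : Fin (N + 1) → Set (OnePoint ℂ) := fun i => connectedComponentIn (Us n)ᶜ (w i) with hD
  have hDsub : ∀ i, D i ⊆ V i := by
    intro i
    have hsubU : D i ⊆ V i ∪ ⋃ j, ⋃ (_ : j ≠ i), V j := by
      intro x hx
      have := hcompl (connectedComponentIn_subset _ _ hx)
      obtain ⟨j, hxj⟩ := Set.mem_iUnion.mp this
      by_cases hji : j = i
      · exact Or.inl (hji ▸ hxj)
      · exact Or.inr (Set.mem_iUnion.mpr ⟨j, Set.mem_iUnion.mpr ⟨hji, hxj⟩⟩)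
    apply IsPreconnected.subset_left_of_subset_union (hVopen i)
      (isOpen_iUnion fun j => isOpen_iUnion fun _ => hVopen j) ?_ hsubU ?_
    · exact isPreconnected_connectedComponentIn
    · rw [Set.disjoint_iff_inter_eq_empty, Set.eq_empty_iff_forall_notMem]
      rintro x ⟨hx1, hx2⟩
      simp only [Set.mem_iUnion] at hx2
      obtain ⟨j, hj, hxj⟩ := hx2
      exact inter_eq_empty_elim (hVdisj i j (Ne.symm hj)) hx1 hxj
    · exact ⟨w i, mem_connectedComponentIn (hwc i), hwV i⟩
  have hDne : ∀ i, (D i).Nonempty := fun i => ⟨w i, mem_connectedComponentIn (hwc i)⟩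
  have hDinj : Function.Injective D := by
    intro i j hij
    by_contra hne
    obtain ⟨x, hx⟩ := hDne i
    have hxi : x ∈ V i := hDsub i hx
    have hxj : x ∈ V j := hDsub j (hij ▸ hx)
    exact inter_eq_empty_elim (hVdisj i j hne) hxi hxj
  obtain ⟨s, hscard, hsmem⟩ := hcc n
  have himg : Finset.image D Finset.univ ⊆ s := by
    intro c hc
    obtain ⟨i, _, rfl⟩ := Finset.mem_image.mp hc
    exact hsmem (w i) (hwc i)
  have hcard : N + 1 ≤ s.card := by
    calc N + 1 = (Finset.univ : Finset (Fin (N + 1))).card := by simp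
    _ = (Finset.image D Finset.univ).card := (Finset.card_image_of_injective _ hDinj).symm
    _ ≤ s.card := Finset.card_le_card himg
  omega
end

section
/- Every sequence (U_n, u_n) of pointed domains in the Riemann sphere ℂ̂ has a subsequence which converges in the Carathéodory topology, where the limit (U, u) is either a pointed domain or a degenerate pair with U = {u}. -/
open Filter Topology Set
open scoped OnePoint

section CaraAux

lemma cara_compl_closedBall_conn {r : ℝ} (hr : 0 < r) :
    IsConnected ((Metric.closedBall (0:ℂ) r)ᶜ) := by
  have hrank : 1 < Module.rank ℝ ℂ := by
    rw [Complex.rank_real_complex]; norm_num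
  have himg : (Metric.closedBall (0:ℂ) r)ᶜ =
      (fun p : ℝ × ℂ => p.1 • p.2) '' (Set.Ioi (1:ℝ) ×ˢ Metric.sphere (0:ℂ) r) := by
    ext z
    simp only [Set.mem_compl_iff, Metric.mem_closedBall, dist_zero_right, not_le,
      Set.mem_image, Set.mem_prod, Set.mem_Ioi, Metric.mem_sphere]
    constructor
    · intro hz
      have hz0 : (0:ℝ) < ‖z‖ := hr.trans hz
      refine ⟨(‖z‖ / r, (r / ‖z‖) • z), ⟨(one_lt_div hr).2 hz, ?_⟩, ?_⟩
      · rw [norm_smul, Real.norm_eq_abs, abs_of_pos (div_pos hr hz0),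
          div_mul_cancel₀ _ hz0.ne']
      · simp only [smul_smul]
        have h1 : ‖z‖ / r * (r / ‖z‖) = 1 := by
          rw [div_mul_div_comm, mul_comm, div_self (by positivity)]
        rw [h1, one_smul]
    · rintro ⟨⟨t, w⟩, ⟨ht, hw⟩, rfl⟩
      simp only at ht hw ⊢
      rw [norm_smul, Real.norm_eq_abs, hw, abs_of_pos (zero_lt_one.trans ht)]
      nlinarith
  rw [himg]
  exact ((isConnected_Ioi).prod (isConnected_sphere hrank 0 hr.le)).image _
    (continuous_smul.continuousOn)

noncomputable def caraBall (c : ℂ) (r : ℝ) : Set (OnePoint ℂ) :=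
  ((↑) : ℂ → OnePoint ℂ) '' Metric.ball c r

noncomputable def caraOut (r : ℝ) : Set (OnePoint ℂ) :=
  {∞} ∪ ((↑) : ℂ → OnePoint ℂ) '' (Metric.closedBall (0:ℂ) r)ᶜ

lemma caraBall_isOpen (c : ℂ) (r : ℝ) : IsOpen (caraBall c r) :=
  OnePoint.isOpenEmbedding_coe.isOpenMap _ Metric.isOpen_ball

lemma caraBall_isConnected (c : ℂ) {r : ℝ} (hr : 0 < r) : IsConnected (caraBall c r) :=
  (((convex_ball c r).isConnected (Metric.nonempty_ball.2 hr))).image _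
    OnePoint.continuous_coe.continuousOn

lemma caraBall_mem {c z : ℂ} {r : ℝ} (h : z ∈ Metric.ball c r) : (z : OnePoint ℂ) ∈ caraBall c r :=
  ⟨z, h, rfl⟩

lemma caraOut_isOpen (r : ℝ) : IsOpen (caraOut r) := by
  rw [caraOut, OnePoint.isOpen_iff_of_mem (Set.mem_union_left _ (Set.mem_singleton _))]
  have hpre : ((↑) : ℂ → OnePoint ℂ) ⁻¹' ({∞} ∪ ((↑) : ℂ → OnePoint ℂ) '' (Metric.closedBall (0:ℂ) r)ᶜ) = (Metric.closedBall (0:ℂ) r)ᶜ := by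
    ext z
    simp only [Set.preimage_union, Set.mem_union, Set.mem_preimage,
      Set.mem_singleton_iff, Set.mem_compl_iff]
    constructor
    · rintro (h | h)
      · exact absurd h (OnePoint.coe_ne_infty z)
      · obtain ⟨w, hw, hwz⟩ := h
        rwa [← OnePoint.coe_eq_coe.1 hwz]
    · intro h; exact Or.inr ⟨z, h, rfl⟩
  rw [hpre, compl_compl]
  exact ⟨Metric.isClosed_closedBall, isCompact_closedBall 0 r⟩

lemma caraOut_isConnected {r : ℝ} (hr : 0 < r) : IsConnected (caraOut r) := by
  have hbase : IsConnected (((↑) : ℂ → OnePoint ℂ) '' (Metric.closedBall (0:ℂ) r)ᶜ) :=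
    (cara_compl_closedBall_conn hr).image _ OnePoint.continuous_coe.continuousOn
  refine hbase.subset_closure Set.subset_union_right ?_
  rintro x (rfl | hx)
  · -- ∞ ∈ closure of the image
    rw [mem_closure_iff_nhds_basis OnePoint.hasBasis_nhds_infty]
    rintro s ⟨hscl, hscomp⟩
    obtain ⟨R, hR⟩ := hscomp.isBounded.subset_closedBall 0
    set m : ℝ := max R r + 1 with hm
    have hnorm : ‖((m : ℝ) : ℂ)‖ = m := by
      rw [Complex.norm_real, Real.norm_eq_abs, abs_of_pos]
      have := le_max_right R r
      linarith
    have hz1 : ((m : ℝ) : ℂ) ∉ Metric.closedBall (0:ℂ) r := by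
      rw [Metric.mem_closedBall, dist_zero_right, hnorm]
      have := le_max_right R r
      intro h; linarith
    have hz2 : ((m : ℝ) : ℂ) ∉ s := by
      intro h
      have := hR h
      rw [Metric.mem_closedBall, dist_zero_right, hnorm] at this
      have := le_max_left R r
      linarith [hR h, Metric.mem_closedBall.1 (hR h)]
    exact ⟨(((m : ℝ) : ℂ) : OnePoint ℂ), ⟨(m:ℝ), hz1, rfl⟩, Or.inl ⟨(m:ℝ), hz2, rfl⟩⟩
  · exact subset_closure hx


lemma cara_exists_basis : ∃ D : ℕ → Set (OnePoint ℂ),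
    (∀ n, IsOpen (D n)) ∧ (∀ n, IsConnected (D n)) ∧
    ∀ O : Set (OnePoint ℂ), IsOpen O → ∀ x ∈ O, ∃ n, x ∈ D n ∧ D n ⊆ O := by
  classical
  obtain ⟨f, hf⟩ := exists_surjective_nat ((ℚ × ℚ × ℚ) ⊕ ℚ)
  set mk : (ℚ × ℚ × ℚ) ⊕ ℚ → Set (OnePoint ℂ) := fun a =>
    Sum.rec (fun p => if 0 < (p.2.2 : ℝ) then caraBall ⟨(p.1 : ℝ), (p.2.1 : ℝ)⟩ (p.2.2 : ℝ)
        else caraBall 0 1)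
      (fun r => if 0 < (r : ℝ) then caraOut (r : ℝ) else caraBall 0 1) a with hmk
  have hopen : ∀ a, IsOpen (mk a) := by
    rintro (⟨p, q, r⟩ | r) <;> simp only [hmk] <;> split_ifs <;>
      first | exact caraBall_isOpen _ _ | exact caraOut_isOpen _
  have hconn : ∀ a, IsConnected (mk a) := by
    rintro (⟨p, q, r⟩ | r) <;> simp only [hmk] <;> split_ifs with h <;>
      first
        | exact caraBall_isConnected _ h
        | exact caraOut_isConnected h
        | exact caraBall_isConnected _ one_pos
  refine ⟨fun n => mk (f n), fun n => hopen _, fun n => hconn _, ?_⟩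
  · intro O hO x hx
    induction x using OnePoint.rec with
    | infty =>
      obtain ⟨hcl, hcomp⟩ := (OnePoint.isOpen_iff_of_mem hx).1 hO
      obtain ⟨R, hR⟩ := hcomp.isBounded.subset_closedBall 0
      obtain ⟨q, hq⟩ := exists_rat_gt (max R 0)
      have hq0 : (0:ℝ) < q := lt_of_le_of_lt (le_max_right R 0) hq
      obtain ⟨n, hn⟩ := hf (Sum.inr q)
      have hmkn : mk (f n) = caraOut (q:ℝ) := by rw [hn]; simp only [hmk]; rw [if_pos hq0]
      refine ⟨n, ?_, ?_⟩
      · show ∞ ∈ mk (f n)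
        rw [hmkn]
        exact Set.mem_union_left _ (Set.mem_singleton _)
      · show mk (f n) ⊆ O
        rw [hmkn]
        rintro y (hy | ⟨w, hw, rfl⟩)
        · rw [Set.mem_singleton_iff.1 hy]; exact hx
        · -- w ∉ closedBall 0 q ⇒ w ∉ (coe⁻¹ O)ᶜ ⇒ coe w ∈ O
          by_contra hyO
          have hwmem : w ∈ (((↑) : ℂ → OnePoint ℂ) ⁻¹' O)ᶜ := fun h => hyO h
          exact hw (Metric.closedBall_subset_closedBall
            ((le_max_left R 0).trans hq.le) (hR hwmem))
    | coe z =>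
      have hz : z ∈ ((↑) : ℂ → OnePoint ℂ) ⁻¹' O := hx
      have hOpre : IsOpen (((↑) : ℂ → OnePoint ℂ) ⁻¹' O) := hO.preimage OnePoint.continuous_coe
      obtain ⟨ε, hε, hball⟩ := Metric.isOpen_iff.1 hOpre z hz
      obtain ⟨p, hp⟩ := exists_rat_near z.re (by positivity : (0:ℝ) < ε/8)
      obtain ⟨q', hq'⟩ := exists_rat_near z.im (by positivity : (0:ℝ) < ε/8)
      obtain ⟨ρ, hρ1, hρ2⟩ := exists_rat_btwn (show ε/4 < ε/2 by linarith)
      set c : ℂ := ⟨(p:ℝ), (q':ℝ)⟩ with hc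
      have hzc : dist z c < ε/4 := by
        have h1 : ‖z - c‖ ≤ |(z-c).re| + |(z-c).im| :=
          Complex.norm_le_abs_re_add_abs_im _
        rw [Complex.dist_eq]
        have hre : (z - c).re = z.re - p := by simp [hc, Complex.sub_re]
        have him : (z - c).im = z.im - q' := by simp [hc, Complex.sub_im]
        rw [hre, him] at h1
        calc ‖z - c‖ ≤ |z.re - ↑p| + |z.im - ↑q'| := h1
          _ < ε/8 + ε/8 := add_lt_add hp hq'
          _ ≤ ε/4 := by linarith
      have hρ0 : (0:ℝ) < ρ := lt_trans (by positivity) hρ1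
      obtain ⟨n, hn⟩ := hf (Sum.inl (p, q', ρ))
      have hmkn : mk (f n) = caraBall c (ρ:ℝ) := by rw [hn]; simp only [hmk]; rw [if_pos hρ0]
      refine ⟨n, ?_, ?_⟩
      · show (z : OnePoint ℂ) ∈ mk (f n)
        rw [hmkn]
        exact caraBall_mem (by rw [Metric.mem_ball]; exact hzc.trans hρ1)
      · show mk (f n) ⊆ O
        rw [hmkn]
        rintro y ⟨w, hw, rfl⟩
        apply hball
        rw [Metric.mem_ball] at hw ⊢
        calc dist w z ≤ dist w c + dist c z := dist_triangle _ _ _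
          _ < ρ + ε/4 := add_lt_add hw (by rwa [dist_comm] at hzc)
          _ < ε/2 + ε/4 := by linarith
          _ < ε := by linarith


instance cara_secondCountable : SecondCountableTopology (OnePoint ℂ) := by
  obtain ⟨D, hDo, hDc, hB⟩ := cara_exists_basis
  refine TopologicalSpace.IsTopologicalBasis.secondCountableTopology
    (b := Set.range D) ?_ (Set.countable_range D)
  refine TopologicalSpace.isTopologicalBasis_of_isOpen_of_nhds ?_ ?_
  · rintro u ⟨n, rfl⟩; exact hDo n
  · intro a u ha hu
    obtain ⟨n, h1, h2⟩ := hB u hu a ha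
    exact ⟨D n, ⟨n, rfl⟩, h1, h2⟩

lemma cara_chain {X : Type*} [TopologicalSpace X] (D : ℕ → Set X)
    (hDo : ∀ i, IsOpen (D i)) (hDc : ∀ i, IsPreconnected (D i))
    (hB : ∀ O : Set X, IsOpen O → ∀ x ∈ O, ∃ n, x ∈ D n ∧ D n ⊆ O)
    {N : Set X} (hNo : IsOpen N) (hNc : IsPreconnected N)
    {u z : X} (hu : u ∈ N) (hz : z ∈ N) :
    ∃ F : Finset ℕ, (∀ i ∈ F, D i ⊆ N) ∧ IsPreconnected (⋃ i ∈ F, D i) ∧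
      u ∈ (⋃ i ∈ F, D i) ∧ z ∈ (⋃ i ∈ F, D i) := by
  classical
  set A : Set X := {y | ∃ F : Finset ℕ, (∀ i ∈ F, D i ⊆ N) ∧
    IsPreconnected (⋃ i ∈ F, D i) ∧ u ∈ (⋃ i ∈ F, D i) ∧ y ∈ (⋃ i ∈ F, D i)} with hA
  suffices hzA : z ∈ A by
    simp only [hA, Set.mem_setOf_eq] at hzA; exact hzA
  have hext : ∀ i, D i ⊆ N → (D i ∩ A).Nonempty → D i ⊆ A := by
    rintro i hiN ⟨y, hyD, F, hFN, hFc, hFu, hFy⟩ y' hy'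
    refine ⟨insert i F, ?_, ?_, ?_, ?_⟩
    · intro j hj
      rcases Finset.mem_insert.1 hj with rfl | hj
      · exact hiN
      · exact hFN j hj
    · rw [Finset.set_biUnion_insert]
      exact IsPreconnected.union y hyD hFy (hDc i) hFc
    · rw [Finset.set_biUnion_insert]
      exact Set.mem_union_right _ hFu
    · rw [Finset.set_biUnion_insert]
      exact Set.mem_union_left _ hy'
  set G1 : Set X := ⋃ i ∈ {i | D i ⊆ N ∧ D i ⊆ A}, D i with hG1
  set G2 : Set X := ⋃ i ∈ {i | D i ⊆ N ∧ D i ∩ A = ∅}, D i with hG2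
  have hG1o : IsOpen G1 := isOpen_biUnion fun i _ => hDo i
  have hG2o : IsOpen G2 := isOpen_biUnion fun i _ => hDo i
  have hcover : N ⊆ G1 ∪ G2 := by
    intro x hx
    obtain ⟨i, hxi, hiN⟩ := hB N hNo x hx
    by_cases hne : (D i ∩ A).Nonempty
    · exact Or.inl (Set.mem_biUnion (⟨hiN, hext i hiN hne⟩ : _ ∧ _) hxi)
    · exact Or.inr (Set.mem_biUnion (⟨hiN, Set.not_nonempty_iff_eq_empty.1 hne⟩ : _ ∧ _) hxi)
  have huA : u ∈ A := by
    obtain ⟨i, hui, hiN⟩ := hB N hNo u hu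
    exact ⟨{i}, by simpa using hiN, by simpa using hDc i, by simpa using hui, by simpa using hui⟩
  have huG1 : u ∈ G1 := by
    obtain ⟨i, hui, hiN⟩ := hB N hNo u hu
    exact Set.mem_biUnion (⟨hiN, hext i hiN ⟨u, hui, huA⟩⟩ : _ ∧ _) hui
  by_contra hzA
  have hzG2 : z ∈ G2 := by
    obtain ⟨i, hzi, hiN⟩ := hB N hNo z hz
    by_cases hne : (D i ∩ A).Nonempty
    · exact absurd (hext i hiN hne hzi) hzA
    · exact Set.mem_biUnion (⟨hiN, Set.not_nonempty_iff_eq_empty.1 hne⟩ : _ ∧ _) hzi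
  obtain ⟨w, hwN, hw1, hw2⟩ := hNc G1 G2 hG1o hG2o hcover ⟨u, hu, huG1⟩ ⟨z, hz, hzG2⟩
  obtain ⟨i, ⟨hiN, hiA⟩, hwi⟩ := Set.mem_iUnion₂.1 hw1
  obtain ⟨j, ⟨hjN, hjA⟩, hwj⟩ := Set.mem_iUnion₂.1 hw2
  exact absurd (Set.mem_inter hwj (hiA hwi)) (by rw [hjA]; exact Set.notMem_empty w)

lemma cara_diagonal (p : ℕ → ℕ → Prop) :
    ∃ σ : ℕ → ℕ, StrictMono σ ∧
      ∀ i, {k | p i (σ k)}.Finite ∨ ∀ᶠ k in atTop, p i (σ k) := by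
  classical
  let step : (ℕ → ℕ) → ℕ → (ℕ → ℕ) := fun t i =>
    if {k | p i (t k)}.Infinite then t ∘ Nat.nth (fun k => p i (t k)) else t
  let g : ℕ → ℕ → ℕ := fun i => Nat.rec id (fun j gj => step gj j) i
  have hgs : ∀ i, g (i + 1) = step (g i) i := fun i => rfl
  have hmono : ∀ i, StrictMono (g i) := by
    intro i
    induction i with
    | zero => exact strictMono_id
    | succ i ih =>
      rw [hgs]
      simp only [step]
      split_ifs with h
      · exact ih.comp (Nat.nth_strictMono h)
      · exact ih
  have hstep_ge : ∀ t i k, ∃ m, k ≤ m ∧ step t i k = t m := by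
    intro t i k
    simp only [step]
    split_ifs with h
    · exact ⟨Nat.nth (fun k => p i (t k)) k, (Nat.nth_strictMono h).le_apply, rfl⟩
    · exact ⟨k, le_rfl, rfl⟩
  have hcomp : ∀ i j, i ≤ j → ∀ k, ∃ m, k ≤ m ∧ g j k = g i m := by
    intro i j hij
    induction j, hij using Nat.le_induction with
    | base => exact fun k => ⟨k, le_rfl, rfl⟩
    | succ j hij ih =>
      intro k
      obtain ⟨m1, hm1, he1⟩ := hstep_ge (g j) j k
      obtain ⟨m2, hm2, he2⟩ := ih m1
      exact ⟨m2, le_trans hm1 hm2, by rw [hgs, he1, he2]⟩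
  have hkey : ∀ i, ({k | p i (g (i+1) k)}).Finite ∨ ∀ k, p i (g (i+1) k) := by
    intro i
    rw [hgs]
    simp only [step]
    split_ifs with h
    · exact Or.inr fun k => Nat.nth_mem_of_infinite h k
    · exact Or.inl (Set.not_infinite.1 h)
  refine ⟨fun k => g k k, strictMono_nat_of_lt_succ fun k => ?_, fun i => ?_⟩
  · have h1 : g (k+1) k < g (k+1) (k+1) := (hmono (k+1)) (Nat.lt_succ_self k)
    have h2 : g k k ≤ g (k+1) k := by
      obtain ⟨m, hm, he⟩ := hstep_ge (g k) k k
      rw [hgs, he]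
      exact (hmono k).monotone hm
    exact lt_of_le_of_lt h2 h1
  rcases hkey i with h | h
  · left
    obtain ⟨M, hM⟩ := h.bddAbove
    refine Set.Finite.subset (Set.finite_Iic (max i M)) ?_
    intro k hk
    simp only [Set.mem_setOf_eq] at hk
    rw [Set.mem_Iic]
    by_contra hgt
    push_neg at hgt
    rw [max_lt_iff] at hgt
    obtain ⟨m, hm, he⟩ := hcomp (i+1) k hgt.1 k
    rw [he] at hk
    have : m ≤ M := hM hk
    omega
  · right
    filter_upwards [eventually_ge_atTop (i+1)] with k hk
    obtain ⟨m, hm, he⟩ := hcomp (i+1) k hk k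
    rw [he]
    exact h m

end CaraAux

/-- Compactness of the Carathéodory topology: every sequence of pointed domains in
the Riemann sphere has a subsequence converging in the Carathéodory topology, the
limit being either a pointed domain or a degenerate pair `({u}, u)`. -/
theorem caraTendsto_compactness (Us : ℕ → Set (OnePoint ℂ)) (us : ℕ → OnePoint ℂ)
    (hUs : ∀ n, IsPointedDomain (Us n) (us n)) :
    ∃ s : ℕ → ℕ, StrictMono s ∧
      ((∃ U u, IsPointedDomain U u ∧
          CaraTendsto (fun k => Us (s k)) (fun k => us (s k)) U u) ∨
        (∃ u, CaraTendstoDeg (fun k => Us (s k)) (fun k => us (s k)) u)) := by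
  classical
  obtain ⟨D, hDo, hDc, hB⟩ := cara_exists_basis
  obtain ⟨u, -, s₀, hs₀, hconv⟩ := isCompact_univ.tendsto_subseq (x := us)
    (fun n => Set.mem_univ _)
  by_cases hdeg : ∀ N : Set (OnePoint ℂ), IsOpen N → IsConnected N → u ∈ N →
      {n | N ⊆ Us (s₀ n)}.Finite
  · exact ⟨s₀, hs₀, Or.inr ⟨u, hconv, hdeg⟩⟩
  push_neg at hdeg
  obtain ⟨N₀, hN₀o, hN₀c, huN₀, hinf₀⟩ := hdeg
  have hinf₀' : {n | N₀ ⊆ Us (s₀ n)}.Infinite := hinf₀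
  set s₁ : ℕ → ℕ := Nat.nth (fun n => N₀ ⊆ Us (s₀ n)) with hs₁def
  have hs₁ : StrictMono s₁ := Nat.nth_strictMono hinf₀'
  have hs₁mem : ∀ k, N₀ ⊆ Us (s₀ (s₁ k)) := fun k => Nat.nth_mem_of_infinite hinf₀' k
  obtain ⟨e, he⟩ := exists_surjective_nat (Finset ℕ)
  set W : Finset ℕ → Set (OnePoint ℂ) := fun F => ⋃ i ∈ F, D i with hW
  obtain ⟨σ, hσ, hσp⟩ := cara_diagonal (fun i k => W (e i) ⊆ Us (s₀ (s₁ k)))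
  refine ⟨fun k => s₀ (s₁ (σ k)), hs₀.comp (hs₁.comp hσ), ?_⟩
  set V : ℕ → Set (OnePoint ℂ) := fun k => Us (s₀ (s₁ (σ k))) with hV
  have hstab : ∀ F : Finset ℕ, {k | W F ⊆ V k}.Infinite → ∀ᶠ k in atTop, W F ⊆ V k := by
    intro F hF
    obtain ⟨i, rfl⟩ := he F
    rcases hσp i with h | h
    · exact absurd h hF
    · exact h
  set G : Set (Finset ℕ) := {F | IsPreconnected (W F) ∧ u ∈ W F ∧ ∀ᶠ k in atTop, W F ⊆ V k}
    with hG
  set U : Set (OnePoint ℂ) := ⋃ F ∈ G, W F with hU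
  have hWo : ∀ F, IsOpen (W F) := fun F => isOpen_biUnion fun i _ => hDo i
  have hUo : IsOpen U := isOpen_biUnion fun F _ => hWo F
  obtain ⟨i₀, hui₀, hi₀N₀⟩ := hB N₀ hN₀o u huN₀
  have hG0 : ({i₀} : Finset ℕ) ∈ G := by
    refine ⟨?_, ?_, ?_⟩
    · show IsPreconnected (⋃ i ∈ ({i₀} : Finset ℕ), D i)
      simpa using (hDc i₀).isPreconnected
    · show u ∈ ⋃ i ∈ ({i₀} : Finset ℕ), D i
      simpa using hui₀
    · refine Filter.Eventually.of_forall fun k => ?_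
      show (⋃ i ∈ ({i₀} : Finset ℕ), D i) ⊆ V k
      simpa using hi₀N₀.trans (hs₁mem (σ k))
  have huU : u ∈ U := Set.mem_biUnion hG0 (by
    show u ∈ ⋃ i ∈ ({i₀} : Finset ℕ), D i
    simpa using hui₀)
  have hUc : IsPreconnected U := by
    have : U = ⋃₀ (W '' G) := by rw [Set.sUnion_image]
    rw [this]
    refine isPreconnected_sUnion u _ ?_ ?_
    · rintro _ ⟨F, hF, rfl⟩; exact hF.2.1
    · rintro _ ⟨F, hF, rfl⟩; exact hF.1
  refine Or.inl ⟨U, u, ⟨hUo, ⟨⟨u, huU⟩, hUc⟩, huU⟩, ?_, ?_, ?_⟩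
  · exact hconv.comp (hs₁.comp hσ).tendsto_atTop
  · intro C hCU hC
    obtain ⟨t, htG, htfin, htcov⟩ := hC.elim_finite_subcover_image (fun F _ => hWo F) hCU
    have hev : ∀ᶠ k in atTop, ∀ F ∈ t, W F ⊆ V k := by
      rw [Filter.eventually_all_finite htfin]
      exact fun F hF => (htG hF).2.2
    filter_upwards [hev] with k hk x hx
    obtain ⟨F, hFt, hxF⟩ := Set.mem_iUnion₂.1 (htcov hx)
    exact hk F hFt hxF
  · intro N hNo hNc huN hNinf x hx
    obtain ⟨F, hFN, hFc, hFu, hFx⟩ := cara_chain D hDo (fun i => (hDc i).isPreconnected) hB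
      hNo hNc.isPreconnected huN hx
    have hsub : {k | N ⊆ V k} ⊆ {k | W F ⊆ V k} := fun k hk =>
      (Set.iUnion₂_subset fun i hi => hFN i hi).trans hk
    exact Set.mem_biUnion (⟨hFc, hFu, hstab F (hNinf.mono hsub)⟩ : F ∈ G) hFx
end

section
/- Define a sequence of quadratic polynomials {P_m}_{m≥1} by P_m(z) = (z − 3)² if m = (j+1)(j+2)/2 − 1 for some integer j ≥ 1, and P_m(z) = z² otherwise. Then all critical points of this sequence escape to infinity: for every m ≥ 0, if c denotes the critical point of P_{m+1} (that is, c = 3 if P_{m+1}(z) = (z − 3)² and c = 0 if P_{m+1}(z) = z²), then |Q_{m,n}(c)| → ∞ as n → ∞. -/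
open Filter Topology

/-- The `m`-th polynomial of the sequence: `P_m(z) = (z - 3)²` if
`m = (j+1)(j+2)/2 - 1` for some `j ≥ 1`, and `P_m(z) = z²` otherwise. -/
noncomputable def seqP (m : ℕ) : ℂ → ℂ :=
  open Classical in
  if ∃ j : ℕ, 1 ≤ j ∧ m = (j + 1) * (j + 2) / 2 - 1 then fun z => (z - 3) ^ 2
  else fun z => z ^ 2

/-- `Q_{m,n} = P_n ∘ ⋯ ∘ P_{m+1}` for the sequence `seqP`. -/
noncomputable def seqQ (m n : ℕ) (z : ℂ) : ℂ :=
  (List.range (n - m)).foldl (fun w k => seqP (m + k + 1) w) z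

/-- The critical point of `P_m`: `3` if `P_m(z) = (z - 3)²` and `0` if
`P_m(z) = z²`. -/
noncomputable def seqCrit (m : ℕ) : ℂ :=
  open Classical in
  if ∃ j : ℕ, 1 ≤ j ∧ m = (j + 1) * (j + 2) / 2 - 1 then 3 else 0

lemma seqQ_succ (m n : ℕ) (h : m ≤ n) (z : ℂ) :
    seqQ m (n + 1) z = seqP (n + 1) (seqQ m n z) := by
  unfold seqQ
  rw [show n + 1 - m = (n - m) + 1 by omega, List.range_succ, List.foldl_append]
  simp only [List.foldl_cons, List.foldl_nil]
  congr 2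
  omega

lemma seqP_growth (k : ℕ) (z : ℂ) (hz : 9 ≤ ‖z‖) :
    4 * ‖z‖ ≤ ‖seqP k z‖ := by
  unfold seqP
  split_ifs with h
  · have h1 : ‖z‖ ≤ ‖z - 3‖ + ‖(3 : ℂ)‖ := by
      calc ‖z‖ = ‖(z - 3) + 3‖ := by ring_nf
        _ ≤ _ := norm_add_le _ _
    have h3 : ‖(3 : ℂ)‖ = 3 := by simp
    have h2 : ‖(z - 3) ^ 2‖ = ‖z - 3‖ ^ 2 := norm_pow _ _
    rw [h2]
    nlinarith [norm_nonneg (z - 3)]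
  · have h2 : ‖z ^ 2‖ = ‖z‖ ^ 2 := norm_pow _ _
    rw [h2]
    nlinarith

/-- All critical points of the sequence escape to infinity: for every `m ≥ 0`, the
orbit under `Q_{m,n}` of the critical point of `P_{m+1}` tends to infinity. -/
theorem seq_critical_points_escape :
    ∀ m : ℕ, Tendsto (fun n => ‖seqQ m n (seqCrit (m + 1))‖) atTop atTop := by
  intro m
  classical
  set c := seqCrit (m + 1) with hc
  set P : ℕ → Prop := fun k => ∃ j : ℕ, 1 ≤ j ∧ k = (j + 1) * (j + 2) / 2 - 1 with hP
  have hex : ∃ k, m + 1 < k ∧ P k := by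
    refine ⟨(m + 3) * (m + 4) / 2 - 1, ?_, ⟨m + 2, by omega, by ring_nf⟩⟩
    have : m + 3 ≤ (m + 3) * (m + 4) / 2 := by
      rw [Nat.le_div_iff_mul_le (by norm_num)]
      nlinarith
    omega
  set N := Nat.find hex with hN
  obtain ⟨hNgt, hNspec⟩ := Nat.find_spec hex
  have hmin : ∀ k, m + 1 < k → k < N → ¬ P k := fun k h1 h2 hp =>
    Nat.find_min hex h2 ⟨h1, hp⟩
  -- Step 1: Q_{m,m+1}(c) = 0
  have h1 : seqQ m (m + 1) c = 0 := by
    rw [seqQ_succ m m le_rfl]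
    have hid : seqQ m m c = c := by simp [seqQ]
    rw [hid, hc]
    unfold seqP seqCrit
    split_ifs with h <;> simp
  -- Step 2: Q stays at 0 until N
  have hzero : ∀ n, m + 1 ≤ n → n < N → seqQ m n c = 0 := by
    intro n hn
    induction n, hn using Nat.le_induction with
    | base => intro _; exact h1
    | succ n hn ih =>
      intro hlt
      rw [seqQ_succ m n (by omega), ih (by omega)]
      have hns : ¬ P (n + 1) := hmin _ (by omega) hlt
      unfold seqP
      rw [if_neg hns]
      simp
  -- Step 3: Q_{m,N}(c) = 9
  have hN9 : ‖seqQ m N c‖ = 9 := by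
    have h2 : seqQ m N c = seqP N (seqQ m (N - 1) c) := by
      have := seqQ_succ m (N - 1) (by omega) c
      rwa [show N - 1 + 1 = N by omega] at this
    rw [h2, hzero (N - 1) (by omega) (by omega)]
    unfold seqP
    rw [if_pos hNspec]
    norm_num
  -- Step 4: growth afterwards
  have hgrow : ∀ n, N ≤ n → 9 * 4 ^ (n - N) ≤ ‖seqQ m n c‖ := by
    intro n hn
    induction n, hn using Nat.le_induction with
    | base => simp [hN9]
    | succ n hn ih =>
      have h9 : (9 : ℝ) ≤ ‖seqQ m n c‖ := by
        have : (9 : ℝ) ≤ 9 * 4 ^ (n - N) := by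
          nlinarith [one_le_pow₀ (by norm_num : (1:ℝ) ≤ 4) (n := n - N)]
        linarith
      have hg := seqP_growth (n + 1) (seqQ m n c) h9
      rw [seqQ_succ m n (by omega)]
      have hp : n + 1 - N = (n - N) + 1 := by omega
      rw [hp, pow_succ]
      nlinarith
  -- Step 5: conclude
  have htend : Tendsto (fun n : ℕ => (9 : ℝ) * 4 ^ (n - N)) atTop atTop := by
    apply Tendsto.const_mul_atTop (by norm_num : (0:ℝ) < 9)
    exact (tendsto_pow_atTop_atTop_of_one_lt (by norm_num : (1:ℝ) < 4)).comp
      (tendsto_sub_atTop_nat N)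
  refine tendsto_atTop_mono' atTop ?_ htend
  filter_upwards [eventually_ge_atTop N] with n hn
  exact hgrow n hn
end
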